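/- arXiv:1306.5517 — 5 statements merged into one kernel-verified Lean document; each statement's English description precedes it below -/
import Mathlib

section
/- Suppose x·w(x) > 0 for a.e. x ∈ [−1,1], and let ε₁ > 0 be any number such that 8‖q₋‖₁²·m₁(ε₁) < 1, where m₁(ε) is the Lebesgue measure of the set {x ∈ [−1,1] : x·w(x) < ε}. Then every non-real eigenvalue λ of the Dirichlet problem −y'' + q y = λ w y on [−1,1] satisfies |Re λ| ≤ (4/ε₁)(‖q₋‖₁ + 4‖q₋‖₁²) and |Im λ| ≤ (4/ε₁)‖q₋‖₁. -/
open MeasureTheory Set Complex Filter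

noncomputable section

namespace AprioriAux

lemma interval_eq_Icc (f : ℝ → ℂ) : (∫ x in (-1:ℝ)..1, f x) = ∫ x in Icc (-1:ℝ) 1, f x := by
  rw [intervalIntegral.integral_of_le (by norm_num), ← integral_Icc_eq_integral_Ioc]

lemma interval_eq_Icc' (f : ℝ → ℝ) : (∫ x in (-1:ℝ)..1, f x) = ∫ x in Icc (-1:ℝ) 1, f x := by
  rw [intervalIntegral.integral_of_le (by norm_num), ← integral_Icc_eq_integral_Ioc]

lemma mul_contOn_integrable {f h : ℝ → ℂ} (hf : IntegrableOn f (Icc (-1:ℝ) 1))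
    (hc : ContinuousOn h (Icc (-1:ℝ) 1)) :
    IntegrableOn (fun x => f x * h x) (Icc (-1:ℝ) 1) := by
  obtain ⟨C, hC⟩ := isCompact_Icc.exists_bound_of_continuousOn hc
  have hb : ∀ᵐ x ∂(volume.restrict (Icc (-1:ℝ) 1)), ‖h x‖ ≤ C :=
    (ae_restrict_mem measurableSet_Icc).mono fun x hx => hC x hx
  exact (hf.bdd_mul (hc.aestronglyMeasurable measurableSet_Icc) hb).congr
    (Eventually.of_forall fun x => mul_comm _ _)

lemma ibp_primitive {g ψ ψ' : ℝ → ℂ}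
    (hg : IntegrableOn g (Icc (-1:ℝ) 1))
    (hψ : ∀ x ∈ Icc (-1:ℝ) 1, HasDerivAt ψ (ψ' x) x)
    (hψ'c : ContinuousOn ψ' (Icc (-1:ℝ) 1)) :
    (∫ x in Icc (-1:ℝ) 1, (∫ t in (-1:ℝ)..x, g t) * ψ' x)
      = (∫ t in Icc (-1:ℝ) 1, g t) * ψ 1 - ∫ t in Icc (-1:ℝ) 1, g t * ψ t := by
  have hψc : ContinuousOn ψ (Icc (-1:ℝ) 1) := fun x hx =>
    ((hψ x hx).continuousAt).continuousWithinAt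
  have hψ'int : IntegrableOn ψ' (Icc (-1:ℝ) 1) :=
    hψ'c.integrableOn_compact isCompact_Icc
  set μ := volume.restrict (Icc (-1:ℝ) 1) with hμ
  have hF : Integrable (Function.uncurry
      (fun x t => if t ≤ x then g t * ψ' x else 0)) (μ.prod μ) := by
    have hbase : Integrable (fun z : ℝ × ℝ => ψ' z.1 * g z.2) (μ.prod μ) :=
      hψ'int.mul_prod hg
    have hbase' : Integrable (fun z : ℝ × ℝ => g z.2 * ψ' z.1) (μ.prod μ) :=
      hbase.congr (Eventually.of_forall fun z => mul_comm _ _)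
    have hs : MeasurableSet {z : ℝ × ℝ | z.2 ≤ z.1} :=
      measurableSet_le measurable_snd measurable_fst
    have := hbase'.indicator hs
    refine this.congr (Eventually.of_forall fun z => ?_)
    by_cases h : z.2 ≤ z.1 <;>
      simp [Function.uncurry, indicator_apply, h, Set.mem_setOf_eq]
  have inner1 : ∀ x ∈ Icc (-1:ℝ) 1,
      (∫ t, (if t ≤ x then g t * ψ' x else 0) ∂μ) = (∫ t in (-1:ℝ)..x, g t) * ψ' x := by
    intro x hx
    have h1 : (fun t => if t ≤ x then g t * ψ' x else 0)
        = (Iic x).indicator (fun t => g t * ψ' x) := by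
      ext t; simp [indicator_apply, mem_Iic]
    have h2 : Iic x ∩ Icc (-1:ℝ) 1 = Icc (-1) x := by
      ext t
      simp only [mem_inter_iff, mem_Iic, mem_Icc]
      constructor
      · rintro ⟨a, b, _⟩; exact ⟨b, a⟩
      · rintro ⟨a, b⟩; exact ⟨b, a, b.trans hx.2⟩
    rw [h1, hμ, integral_indicator measurableSet_Iic,
      Measure.restrict_restrict measurableSet_Iic, h2, integral_mul_const]
    congr 1
    rw [intervalIntegral.integral_of_le hx.1, ← integral_Icc_eq_integral_Ioc]
  have inner2 : ∀ t ∈ Icc (-1:ℝ) 1,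
      (∫ x, (if t ≤ x then g t * ψ' x else 0) ∂μ) = g t * (ψ 1 - ψ t) := by
    intro t ht
    have h1 : (fun x => if t ≤ x then g t * ψ' x else 0)
        = (Ici t).indicator (fun x => g t * ψ' x) := by
      ext x; simp [indicator_apply, mem_Ici]
    have h2 : Ici t ∩ Icc (-1:ℝ) 1 = Icc t 1 := by
      ext x
      simp only [mem_inter_iff, mem_Ici, mem_Icc]
      constructor
      · rintro ⟨a, _, b⟩; exact ⟨a, b⟩
      · rintro ⟨a, b⟩; exact ⟨a, ht.1.trans a, b⟩
    have hsub : uIcc t 1 ⊆ Icc (-1:ℝ) 1 := by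
      rw [uIcc_of_le ht.2]
      exact Icc_subset_Icc ht.1 le_rfl
    have hftc : (∫ x in t..(1:ℝ), ψ' x) = ψ 1 - ψ t := by
      refine intervalIntegral.integral_eq_sub_of_hasDerivAt
        (fun x hx => hψ x (hsub hx)) ?_
      exact (hψ'c.mono hsub).intervalIntegrable
    rw [h1, hμ, integral_indicator measurableSet_Ici,
      Measure.restrict_restrict measurableSet_Ici, h2, integral_const_mul]
    congr 1
    rw [← hftc, intervalIntegral.integral_of_le ht.2, ← integral_Icc_eq_integral_Ioc]
  have hswap := integral_integral_swap hF
  have e1 : (∫ x in Icc (-1:ℝ) 1, (∫ t in (-1:ℝ)..x, g t) * ψ' x)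
      = ∫ x, ∫ t, (if t ≤ x then g t * ψ' x else 0) ∂μ ∂μ := by
    refine setIntegral_congr_fun measurableSet_Icc fun x hx => ?_
    exact (inner1 x hx).symm
  have e2 : (∫ t, ∫ x, (if t ≤ x then g t * ψ' x else 0) ∂μ ∂μ)
      = ∫ t in Icc (-1:ℝ) 1, g t * (ψ 1 - ψ t) := by
    refine setIntegral_congr_fun measurableSet_Icc fun t ht => ?_
    exact inner2 t ht
  rw [e1, hswap, e2]
  have hint1 : IntegrableOn (fun t => g t * ψ t) (Icc (-1:ℝ) 1) :=
    mul_contOn_integrable hg hψc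
  calc (∫ t in Icc (-1:ℝ) 1, g t * (ψ 1 - ψ t))
      = ∫ t in Icc (-1:ℝ) 1, (g t * ψ 1 - g t * ψ t) := by
        simp_rw [mul_sub]
    _ = (∫ t in Icc (-1:ℝ) 1, g t * ψ 1) - ∫ t in Icc (-1:ℝ) 1, g t * ψ t :=
        integral_sub (hg.mul_const _) hint1
    _ = (∫ t in Icc (-1:ℝ) 1, g t) * ψ 1 - ∫ t in Icc (-1:ℝ) 1, g t * ψ t := by
        rw [integral_mul_const]


lemma integral_ofRealC {X : Type*} [MeasurableSpace X] (μ : Measure X) (f : X → ℝ) :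
    ∫ x, ((f x : ℝ) : ℂ) ∂μ = ((∫ x, f x ∂μ : ℝ) : ℂ) := integral_ofReal

lemma mul_contOn_integrableR {f h : ℝ → ℝ} (hf : IntegrableOn f (Icc (-1:ℝ) 1))
    (hc : ContinuousOn h (Icc (-1:ℝ) 1)) :
    IntegrableOn (fun x => f x * h x) (Icc (-1:ℝ) 1) := by
  obtain ⟨C, hC⟩ := isCompact_Icc.exists_bound_of_continuousOn hc
  have hb : ∀ᵐ x ∂(volume.restrict (Icc (-1:ℝ) 1)), ‖h x‖ ≤ C :=
    (ae_restrict_mem measurableSet_Icc).mono fun x hx => hC x hx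
  exact (hf.bdd_mul (hc.aestronglyMeasurable measurableSet_Icc) hb).congr
    (Eventually.of_forall fun x => mul_comm _ _)

lemma cauchy_schwarz_Icc {f g : ℝ → ℝ} (hf : ContinuousOn f (Icc (-1:ℝ) 1))
    (hg : ContinuousOn g (Icc (-1:ℝ) 1)) (hf0 : ∀ x, 0 ≤ f x) (hg0 : ∀ x, 0 ≤ g x) :
    (∫ x in Icc (-1:ℝ) 1, f x * g x)
      ≤ Real.sqrt (∫ x in Icc (-1:ℝ) 1, f x ^ 2) *
        Real.sqrt (∫ x in Icc (-1:ℝ) 1, g x ^ 2) := by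
  set μ := volume.restrict (Icc (-1:ℝ) 1) with hμ
  haveI : IsFiniteMeasure μ := ⟨by
    rw [hμ, Measure.restrict_apply_univ]
    exact measure_Icc_lt_top⟩
  obtain ⟨Cf, hCf⟩ := isCompact_Icc.exists_bound_of_continuousOn hf
  obtain ⟨Cg, hCg⟩ := isCompact_Icc.exists_bound_of_continuousOn hg
  have hfm : MemLp f (ENNReal.ofReal 2) μ :=
    MemLp.of_bound (hf.aestronglyMeasurable measurableSet_Icc) Cf
      ((ae_restrict_mem measurableSet_Icc).mono fun x hx => hCf x hx)
  have hgm : MemLp g (ENNReal.ofReal 2) μ :=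
    MemLp.of_bound (hg.aestronglyMeasurable measurableSet_Icc) Cg
      ((ae_restrict_mem measurableSet_Icc).mono fun x hx => hCg x hx)
  have hpq : Real.HolderConjugate 2 2 := ⟨by norm_num, by norm_num, by norm_num⟩
  have h := integral_mul_le_Lp_mul_Lq_of_nonneg hpq
    (Eventually.of_forall hf0) (Eventually.of_forall hg0) hfm hgm
  have e1 : (∫ a, f a ^ (2:ℝ) ∂μ) = ∫ a, f a ^ 2 ∂μ := by
    refine integral_congr_ae (Eventually.of_forall fun a => ?_)
    norm_cast
  have e2 : (∫ a, g a ^ (2:ℝ) ∂μ) = ∫ a, g a ^ 2 ∂μ := by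
    refine integral_congr_ae (Eventually.of_forall fun a => ?_)
    norm_cast
  rw [e1, e2] at h
  rw [Real.sqrt_eq_rpow, Real.sqrt_eq_rpow]
  exact h


lemma final_arith {e Q m M N D K A rr ii : ℝ}
    (he : 0 < e) (hQ : 0 ≤ Q) (hm : 0 ≤ m) (hM : 0 < M)
    (hNn : 0 ≤ N) (hDn : 0 ≤ D)
    (h1 : M^2 ≤ 2*(N*D)) (h2 : D^2 ≤ A) (h3 : A ≤ Q*M^2) (h4 : M^2 ≤ D^2/2)
    (h5 : e*N^2 - e*M^2*m ≤ K)
    (h6 : |rr| * K ≤ 2*A) (h7 : |ii| * K ≤ N*D)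
    (h8 : 8*Q^2*m < 1) :
    |rr| ≤ 4/e * (Q + 4*Q^2) ∧ |ii| ≤ 4/e * Q := by
  have hM2pos : 0 < M^2 := pow_pos hM 2
  have hD2pos : 0 < D^2 := by nlinarith [hM2pos, h4]
  have hDpos : 0 < D := lt_of_le_of_ne hDn (by intro h; rw [← h] at hD2pos; simp at hD2pos)
  have hQ2 : 2 ≤ Q := by nlinarith [h2, h3, h4, hD2pos]
  have hNpos : 0 < N := by nlinarith [h1, hM2pos, hDpos, hNn]
  have hNpos2 : 0 < N^2 := pow_pos hNpos 2
  have hDle : D ≤ 2*Q*N := by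
    have hQM : Q * M^2 ≤ Q * (2*(N*D)) := mul_le_mul_of_nonneg_left h1 hQ
    nlinarith [h2, h3, hQM, hDpos]
  have hM2N : M^2 ≤ 4*Q*N^2 := by nlinarith [h1, hDle, hNn]
  have h16 : 16*m*Q ≤ 8*m*Q^2 := by
    have := mul_nonneg (mul_nonneg hm hQ) (by linarith : (0:ℝ) ≤ Q - 2)
    nlinarith [this]
  have h17 : 16*m*Q < 1 := lt_of_le_of_lt h16 (by linarith only [h8])
  have hmM2 : m*M^2 ≤ N^2/4 := by
    have e1 : m * M^2 ≤ m * (4*Q*N^2) := mul_le_mul_of_nonneg_left hM2N hm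
    have e2 : (16*m*Q) * N^2 ≤ 1 * N^2 := mul_le_mul_of_nonneg_right h17.le (sq_nonneg N)
    linarith only [e1, e2]
  have hK34 : 3/4*(e*N^2) ≤ K := by
    have e3 : e*(m*M^2) ≤ e*(N^2/4) := mul_le_mul_of_nonneg_left hmM2 he.le
    linarith only [h5, e3]
  have hKpos : 0 < K := lt_of_lt_of_le (by positivity) hK34
  constructor
  · rw [div_mul_eq_mul_div, le_div_iff₀ he]
    have c0 : Q * M^2 ≤ Q * (4*Q*N^2) := mul_le_mul_of_nonneg_left hM2N hQ
    have c1 : |rr| * K ≤ 8*Q^2*N^2 := le_trans h6 (by linarith only [h3, c0])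
    have c2 : |rr| * (3/4*(e*N^2)) ≤ |rr| * K := mul_le_mul_of_nonneg_left hK34 (abs_nonneg _)
    have d1 : (3/4 * (e * |rr|)) * N^2 ≤ (8*Q^2) * N^2 := by linarith only [c1, c2]
    have d2 : 3/4 * (e * |rr|) ≤ 8*Q^2 := le_of_mul_le_mul_right d1 hNpos2
    linarith only [d2, hQ, sq_nonneg Q]
  · rw [div_mul_eq_mul_div, le_div_iff₀ he]
    have c0 : N*D ≤ N*(2*Q*N) := mul_le_mul_of_nonneg_left hDle hNn
    have c1 : |ii| * K ≤ 2*Q*N^2 := le_trans h7 (by linarith only [c0])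
    have c2 : |ii| * (3/4*(e*N^2)) ≤ |ii| * K := mul_le_mul_of_nonneg_left hK34 (abs_nonneg _)
    have d1 : (3/4 * (e * |ii|)) * N^2 ≤ (2*Q) * N^2 := by linarith only [c1, c2]
    have d2 : 3/4 * (e * |ii|) ≤ 2*Q := le_of_mul_le_mul_right d1 hNpos2
    linarith only [d2, hQ]


end AprioriAux

open AprioriAux

def IsEigenpair (q r : ℝ → ℝ) (lam : ℂ) (φ φ' : ℝ → ℂ) : Prop :=
  (∀ x ∈ Icc (-1:ℝ) 1, HasDerivAt φ (φ' x) x) ∧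
  (∀ x ∈ Icc (-1:ℝ) 1,
    φ' x = φ' (-1) + ∫ t in (-1:ℝ)..x, ((q t : ℂ) * φ t - lam * (r t : ℂ) * φ t)) ∧
  φ (-1) = 0 ∧ φ 1 = 0 ∧ ∃ x ∈ Icc (-1:ℝ) 1, φ x ≠ 0

def IsEigenvalue (q r : ℝ → ℝ) (lam : ℂ) : Prop :=
  ∃ φ φ' : ℝ → ℂ, IsEigenpair q r lam φ φ'

set_option maxHeartbeats 1000000 in
/-- a priori bounds on non-real eigenvalues when `x·w(x) > 0` a.e. -/
theorem apriori_bounds_one_turning_point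
    (q w : ℝ → ℝ)
    (hq : IntegrableOn q (Icc (-1:ℝ) 1))
    (hw : IntegrableOn w (Icc (-1:ℝ) 1))
    (hw0 : ∀ᵐ x ∂(volume.restrict (Icc (-1:ℝ) 1)), w x ≠ 0)
    (hsign : 0 < volume {x ∈ Icc (-1:ℝ) 1 | 0 < w x} ∧
             0 < volume {x ∈ Icc (-1:ℝ) 1 | w x < 0})
    (hxw : ∀ᵐ x ∂(volume.restrict (Icc (-1:ℝ) 1)), 0 < x * w x)
    (ε₁ : ℝ) (hε₁ : 0 < ε₁)
    (hm : 8 * (∫ x in (-1:ℝ)..1, max (-(q x)) 0) ^ 2 *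
        (volume {x ∈ Icc (-1:ℝ) 1 | x * w x < ε₁}).toReal < 1)
    (lam : ℂ) (him : lam.im ≠ 0) (heig : IsEigenvalue q w lam) :
    |lam.re| ≤ 4 / ε₁ * ((∫ x in (-1:ℝ)..1, max (-(q x)) 0) +
        4 * (∫ x in (-1:ℝ)..1, max (-(q x)) 0) ^ 2) ∧
    |lam.im| ≤ 4 / ε₁ * (∫ x in (-1:ℝ)..1, max (-(q x)) 0) := by
  obtain ⟨φ, φ', hd, hintrep, hbm, hbp, xz, hxzI, hφxz⟩ := heig
  set I : Set ℝ := Icc (-1:ℝ) 1 with hI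
  have hm11 : (-1:ℝ) ∈ I := by constructor <;> norm_num
  have hp11 : (1:ℝ) ∈ I := by constructor <;> norm_num
  -- continuity of φ
  have hφc : ContinuousOn φ I := fun x hx => (hd x hx).continuousAt.continuousWithinAt
  set g : ℝ → ℂ := fun t => (q t : ℂ) * φ t - lam * (w t : ℂ) * φ t with hgdef
  have hqC : IntegrableOn (fun t => (q t : ℂ)) I := hq.ofReal
  have hwC : IntegrableOn (fun t => (w t : ℂ)) I := hw.ofReal
  have hg : IntegrableOn g I := by
    have h1 : IntegrableOn (fun t => (q t : ℂ) * φ t) I := mul_contOn_integrable hqC hφc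
    have h2 : IntegrableOn (fun t => (lam * (w t : ℂ)) * φ t) I :=
      mul_contOn_integrable (hwC.const_mul lam) hφc
    exact h1.sub h2
  -- φ' agrees on I with a continuous function
  have hφ'rep : ∀ x ∈ I, φ' x = φ' (-1) + ∫ t in (-1:ℝ)..x, g t := hintrep
  have hφ'c : ContinuousOn φ' I := by
    have hprim : ContinuousOn (fun x => ∫ t in (-1:ℝ)..x, g t) I := by
      have := intervalIntegral.continuousOn_primitive_interval (a := (-1:ℝ)) (b := 1) (μ := volume)
        (f := g) (by rwa [uIcc_of_le (by norm_num : (-1:ℝ) ≤ 1)])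
      rwa [uIcc_of_le (by norm_num : (-1:ℝ) ≤ 1)] at this
    exact (continuousOn_const.add hprim).congr fun x hx => hφ'rep x hx
  have hφ'int : IntegrableOn φ' I := hφ'c.integrableOn_compact isCompact_Icc
  -- FTC for φ on subintervals
  have hsubI : ∀ a ∈ I, ∀ b ∈ I, uIcc a b ⊆ I := by
    intro a ha b hb
    rw [hI, ← uIcc_of_le (by norm_num : (-1:ℝ) ≤ 1)]
    rw [hI, ← uIcc_of_le (by norm_num : (-1:ℝ) ≤ 1)] at ha hb
    exact uIcc_subset_uIcc ha hb
  have hftc : ∀ a ∈ I, ∀ b ∈ I, (∫ x in a..b, φ' x) = φ b - φ a := by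
    intro a ha b hb
    exact intervalIntegral.integral_eq_sub_of_hasDerivAt
      (fun x hx => hd x (hsubI a ha b hb hx))
      ((hφ'c.mono (hsubI a ha b hb)).intervalIntegrable)
  -- maximum of |φ| on I
  obtain ⟨x₀, hx₀I, hmax'⟩ := isCompact_Icc.exists_isMaxOn (nonempty_Icc.mpr (by norm_num))
    (continuous_norm.comp_continuousOn hφc)
  have hmax : ∀ x ∈ I, ‖φ x‖ ≤ ‖φ x₀‖ := fun x hx => hmax' hx
  set M : ℝ := ‖φ x₀‖ with hMdef
  have hM0 : 0 < M := lt_of_lt_of_le (norm_pos_iff.mpr hφxz) (hmax xz hxzI)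
  -- the key weak-form identity
  have key : ∀ ψ ψd : ℝ → ℂ, (∀ x ∈ I, HasDerivAt ψ (ψd x) x) → ContinuousOn ψd I →
      ψ (-1) = 0 → ψ 1 = 0 →
      (∫ x in I, φ' x * ψd x) = - ∫ t in I, g t * ψ t := by
    intro ψ ψd hψ hψc hψm hψp
    have hrw : ∀ x ∈ I, φ' x * ψd x
        = φ' (-1) * ψd x + (∫ t in (-1:ℝ)..x, g t) * ψd x := by
      intro x hx; rw [hφ'rep x hx]; ring
    rw [setIntegral_congr_fun measurableSet_Icc hrw]
    have hψdint : IntegrableOn ψd I := hψc.integrableOn_compact isCompact_Icc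
    have hprimc : ContinuousOn (fun x => ∫ t in (-1:ℝ)..x, g t) I := by
      have := intervalIntegral.continuousOn_primitive_interval (a := (-1:ℝ)) (b := 1)
        (μ := volume) (f := g) (by rwa [uIcc_of_le (by norm_num : (-1:ℝ) ≤ 1)])
      rwa [uIcc_of_le (by norm_num : (-1:ℝ) ≤ 1)] at this
    rw [integral_add (hψdint.const_mul _)
      (((hprimc.mul hψc).integrableOn_compact isCompact_Icc :
        IntegrableOn (fun x => (∫ t in (-1:ℝ)..x, g t) * ψd x) I volume))]
    have hftcψ : (∫ x in I, ψd x) = ψ 1 - ψ (-1) := by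
      rw [← interval_eq_Icc]
      refine intervalIntegral.integral_eq_sub_of_hasDerivAt (fun x hx => hψ x ?_) ?_
      · rwa [uIcc_of_le (by norm_num : (-1:ℝ) ≤ 1)] at hx
      · refine ContinuousOn.intervalIntegrable ?_
        rwa [uIcc_of_le (by norm_num : (-1:ℝ) ≤ 1)]
    rw [integral_const_mul, hftcψ, hψm, hψp, ibp_primitive hg hψ hψc, hψp]
    ring
  -- conjugate derivative
  have hstar : ∀ x ∈ I, HasDerivAt (fun y => (starRingEnd ℂ) (φ y))
      ((starRingEnd ℂ) (φ' x)) x := fun x hx => (hd x hx).star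
  have hconjφc : ContinuousOn (fun x => (starRingEnd ℂ) (φ x)) I :=
    continuous_star.comp_continuousOn hφc
  have hconjφ'c : ContinuousOn (fun x => (starRingEnd ℂ) (φ' x)) I :=
    continuous_star.comp_continuousOn hφ'c
  -- Identity 1
  have ID1 : (∫ x in I, φ' x * (starRingEnd ℂ) (φ' x))
      = - ∫ t in I, g t * (starRingEnd ℂ) (φ t) :=
    key _ _ hstar hconjφ'c (by rw [hbm, map_zero]) (by rw [hbp, map_zero])
  -- Identity 2
  have hder2 : ∀ x ∈ I, HasDerivAt (fun y : ℝ => (y : ℂ) * (starRingEnd ℂ) (φ y))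
      ((starRingEnd ℂ) (φ x) + (x : ℂ) * (starRingEnd ℂ) (φ' x)) x := by
    intro x hx
    have h1 : HasDerivAt (fun y : ℝ => (y : ℂ)) 1 x := by
      simpa using (hasDerivAt_id x).ofReal_comp
    have := h1.mul ((hd x hx).star)
    simpa [Pi.mul_def] using this
  have hder2c : ContinuousOn (fun x => (starRingEnd ℂ) (φ x)
      + (x : ℂ) * (starRingEnd ℂ) (φ' x)) I :=
    hconjφc.add ((Complex.continuous_ofReal.continuousOn).mul hconjφ'c)
  have ID2 : (∫ x in I, φ' x * ((starRingEnd ℂ) (φ x) + (x : ℂ) * (starRingEnd ℂ) (φ' x)))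
      = - ∫ t in I, g t * ((t : ℂ) * (starRingEnd ℂ) (φ t)) :=
    key _ _ hder2 hder2c (by rw [hbm, map_zero, mul_zero]) (by rw [hbp, map_zero, mul_zero])
  -- Identity 0
  have ID0 : (∫ x in I, (φ' x * (starRingEnd ℂ) (φ x) + φ x * (starRingEnd ℂ) (φ' x))) = 0 := by
    rw [← interval_eq_Icc]
    have hder : ∀ x ∈ uIcc (-1:ℝ) 1, HasDerivAt (fun y => φ y * (starRingEnd ℂ) (φ y))
        (φ' x * (starRingEnd ℂ) (φ x) + φ x * (starRingEnd ℂ) (φ' x)) x := by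
      intro x hx
      rw [uIcc_of_le (by norm_num : (-1:ℝ) ≤ 1)] at hx
      exact (hd x hx).mul ((hd x hx).star)
    have hint : IntervalIntegrable (fun x => φ' x * (starRingEnd ℂ) (φ x)
        + φ x * (starRingEnd ℂ) (φ' x)) volume (-1) 1 := by
      refine ContinuousOn.intervalIntegrable ?_
      rw [uIcc_of_le (by norm_num : (-1:ℝ) ≤ 1)]
      exact (hφ'c.mul hconjφc).add (hφc.mul hconjφ'c)
    rw [intervalIntegral.integral_eq_sub_of_hasDerivAt hder hint, hbm, hbp]
    simp
  -- real quantities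
  set aφ : ℝ → ℝ := fun x => ‖φ x‖ with haφdef
  set aφ' : ℝ → ℝ := fun x => ‖φ' x‖ with haφ'def
  have haφc : ContinuousOn aφ I := continuous_norm.comp_continuousOn hφc
  have haφ'c : ContinuousOn aφ' I := continuous_norm.comp_continuousOn hφ'c
  have haφ2c : ContinuousOn (fun x => aφ x ^ 2) I := haφc.pow 2
  have haφ'2c : ContinuousOn (fun x => aφ' x ^ 2) I := haφ'c.pow 2
  set N2 : ℝ := ∫ x in I, aφ x ^ 2 with hN2def
  set D2 : ℝ := ∫ x in I, aφ' x ^ 2 with hD2def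
  set Wint : ℝ := ∫ x in I, w x * aφ x ^ 2 with hWintdef
  set Qint : ℝ := ∫ x in I, q x * aφ x ^ 2 with hQintdef
  set K : ℝ := ∫ x in I, x * w x * aφ x ^ 2 with hKdef
  set R : ℝ := ∫ x in I, x * q x * aφ x ^ 2 with hRdef
  set A : ℝ := ∫ x in I, max (-(q x)) 0 * aφ x ^ 2 with hAdef
  set P : ℝ := ∫ x in I, max (q x) 0 * aφ x ^ 2 with hPdef
  set J : ℂ := ∫ x in I, φ' x * (starRingEnd ℂ) (φ x) with hJdef
  set X2 : ℝ := ∫ x in I, x * aφ' x ^ 2 with hX2def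
  set Qn : ℝ := ∫ x in I, max (-(q x)) 0 with hQndef
  -- integrability of the real integrands
  have hwnsq : IntegrableOn (fun x => w x * aφ x ^ 2) I := mul_contOn_integrableR hw haφ2c
  have hqnsq : IntegrableOn (fun x => q x * aφ x ^ 2) I := mul_contOn_integrableR hq haφ2c
  have hxc : ContinuousOn (fun x : ℝ => x) I := continuous_id.continuousOn
  have hxwnsq : IntegrableOn (fun x => x * w x * aφ x ^ 2) I :=
    (mul_contOn_integrableR hw (hxc.mul haφ2c)).congr_fun
      (fun x _ => by simp only [Pi.mul_apply]; ring) measurableSet_Icc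
  have hxqnsq : IntegrableOn (fun x => x * q x * aφ x ^ 2) I :=
    (mul_contOn_integrableR hq (hxc.mul haφ2c)).congr_fun
      (fun x _ => by simp only [Pi.mul_apply]; ring) measurableSet_Icc
  have hqm : IntegrableOn (fun x => max (-(q x)) 0) I := hq.neg.pos_part
  have hqp : IntegrableOn (fun x => max (q x) 0) I := hq.pos_part
  have hqmnsq : IntegrableOn (fun x => max (-(q x)) 0 * aφ x ^ 2) I :=
    mul_contOn_integrableR hqm haφ2c
  have hqpnsq : IntegrableOn (fun x => max (q x) 0 * aφ x ^ 2) I :=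
    mul_contOn_integrableR hqp haφ2c
  -- pointwise conjugation identities
  have hmc : ∀ x, φ x * (starRingEnd ℂ) (φ x) = ((aφ x ^ 2 : ℝ) : ℂ) := by
    intro x; rw [Complex.mul_conj, ← Complex.sq_norm]
  have hmc' : ∀ x, φ' x * (starRingEnd ℂ) (φ' x) = ((aφ' x ^ 2 : ℝ) : ℂ) := by
    intro x; rw [Complex.mul_conj, ← Complex.sq_norm]
  have hgconj : ∀ t, g t * (starRingEnd ℂ) (φ t)
      = ((q t * aφ t ^ 2 : ℝ) : ℂ) - lam * ((w t * aφ t ^ 2 : ℝ) : ℂ) := by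
    intro t
    have h1 : g t * (starRingEnd ℂ) (φ t)
        = (q t : ℂ) * (φ t * (starRingEnd ℂ) (φ t))
          - lam * ((w t : ℂ) * (φ t * (starRingEnd ℂ) (φ t))) := by
      simp only [hgdef]; ring
    rw [h1, hmc t]
    push_cast
    ring
  -- Equation 1
  have LHS1 : (∫ x in I, φ' x * (starRingEnd ℂ) (φ' x)) = ((D2 : ℝ) : ℂ) := by
    rw [hD2def]
    rw [show (fun x => φ' x * (starRingEnd ℂ) (φ' x)) = fun x => ((aφ' x ^ 2 : ℝ) : ℂ) from
      funext hmc']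
    exact integral_ofRealC _ _
  have RHS1 : (∫ t in I, g t * (starRingEnd ℂ) (φ t)) = ((Qint : ℝ) : ℂ) - lam * ((Wint : ℝ) : ℂ) := by
    rw [show (fun t => g t * (starRingEnd ℂ) (φ t)) = fun t =>
      (((q t * aφ t ^ 2 : ℝ)) : ℂ) - lam * ((w t * aφ t ^ 2 : ℝ) : ℂ) from funext hgconj]
    have h1 : Integrable (fun t : ℝ => ((q t * aφ t ^ 2 : ℝ) : ℂ)) (volume.restrict I) :=
      hqnsq.ofReal
    have h2 : Integrable (fun t : ℝ => lam * ((w t * aφ t ^ 2 : ℝ) : ℂ)) (volume.restrict I) :=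
      (hwnsq.ofReal (𝕜 := ℂ)).const_mul lam
    rw [integral_sub h1 h2, integral_const_mul, integral_ofRealC, integral_ofRealC]
  have EQ1 : ((D2 : ℝ) : ℂ) = -(((Qint : ℝ) : ℂ) - lam * ((Wint : ℝ) : ℂ)) := by
    rw [← LHS1, ← RHS1]; exact ID1
  have hWint : Wint = 0 := by
    have h := congrArg Complex.im EQ1
    simp only [Complex.ofReal_im, Complex.neg_im, Complex.sub_im, Complex.mul_im,
      Complex.ofReal_re, Complex.ofReal_im, mul_zero, add_zero, zero_sub, neg_neg] at h
    have h2 : lam.im * Wint = 0 := by linarith only [h]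
    rcases mul_eq_zero.mp h2 with h' | h'
    · exact absurd h' him
    · exact h'
  have hD2Q : D2 = -Qint := by
    have h := congrArg Complex.re EQ1
    simp only [Complex.ofReal_re, Complex.neg_re, Complex.sub_re, Complex.mul_re,
      Complex.ofReal_im, mul_zero, sub_zero, Complex.ofReal_re] at h
    rw [hWint] at h
    simpa using h
  -- Equation 2
  have LHS2 : (∫ x in I, φ' x * ((starRingEnd ℂ) (φ x) + (x : ℂ) * (starRingEnd ℂ) (φ' x)))
      = J + ((X2 : ℝ) : ℂ) := by
    have hpt : ∀ x : ℝ, φ' x * ((starRingEnd ℂ) (φ x) + (x : ℂ) * (starRingEnd ℂ) (φ' x))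
        = φ' x * (starRingEnd ℂ) (φ x) + ((x * aφ' x ^ 2 : ℝ) : ℂ) := by
      intro x
      have : φ' x * ((starRingEnd ℂ) (φ x) + (x : ℂ) * (starRingEnd ℂ) (φ' x))
          = φ' x * (starRingEnd ℂ) (φ x) + (x : ℂ) * (φ' x * (starRingEnd ℂ) (φ' x)) := by ring
      rw [this, hmc']
      push_cast
      ring
    rw [show (fun x => φ' x * ((starRingEnd ℂ) (φ x) + (x : ℂ) * (starRingEnd ℂ) (φ' x)))
      = fun x => φ' x * (starRingEnd ℂ) (φ x) + ((x * aφ' x ^ 2 : ℝ) : ℂ) from funext hpt]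
    have hi1 : IntegrableOn (fun x => φ' x * (starRingEnd ℂ) (φ x)) I :=
      (hφ'c.mul hconjφc).integrableOn_compact isCompact_Icc
    have hi2 : IntegrableOn (fun x : ℝ => ((x * aφ' x ^ 2 : ℝ) : ℂ)) I :=
      (((hxc.mul haφ'2c)).integrableOn_compact isCompact_Icc).ofReal
    have hi2' : Integrable (fun x : ℝ => ((x * aφ' x ^ 2 : ℝ) : ℂ)) (volume.restrict I) := hi2
    rw [integral_add hi1 hi2', integral_ofRealC]
  have RHS2 : (∫ t in I, g t * ((t : ℂ) * (starRingEnd ℂ) (φ t)))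
      = ((R : ℝ) : ℂ) - lam * ((K : ℝ) : ℂ) := by
    have hpt : ∀ t : ℝ, g t * ((t : ℂ) * (starRingEnd ℂ) (φ t))
        = ((t * q t * aφ t ^ 2 : ℝ) : ℂ) - lam * ((t * w t * aφ t ^ 2 : ℝ) : ℂ) := by
      intro t
      have h1 : g t * ((t : ℂ) * (starRingEnd ℂ) (φ t))
          = (t : ℂ) * (g t * (starRingEnd ℂ) (φ t)) := by ring
      rw [h1, hgconj t]
      push_cast
      ring
    rw [show (fun t => g t * ((t : ℂ) * (starRingEnd ℂ) (φ t))) = fun t =>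
      ((t * q t * aφ t ^ 2 : ℝ) : ℂ) - lam * ((t * w t * aφ t ^ 2 : ℝ) : ℂ) from funext hpt]
    have h1 : Integrable (fun t : ℝ => ((t * q t * aφ t ^ 2 : ℝ) : ℂ)) (volume.restrict I) :=
      hxqnsq.ofReal
    have h2 : Integrable (fun t : ℝ => lam * ((t * w t * aφ t ^ 2 : ℝ) : ℂ)) (volume.restrict I) :=
      (hxwnsq.ofReal (𝕜 := ℂ)).const_mul lam
    rw [integral_sub h1 h2, integral_const_mul, integral_ofRealC, integral_ofRealC]
  have EQ2 : J + ((X2 : ℝ) : ℂ) = -(((R : ℝ) : ℂ) - lam * ((K : ℝ) : ℂ)) := by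
    rw [← LHS2, ← RHS2]; exact ID2
  -- J has zero real part
  have hJconj : (∫ x in I, φ x * (starRingEnd ℂ) (φ' x)) = (starRingEnd ℂ) J := by
    rw [hJdef, ← integral_conj]
    refine integral_congr_ae (Eventually.of_forall fun x => ?_)
    simp only [map_mul, RingHomCompTriple.comp_apply, RingHom.id_apply, Complex.conj_conj]
    ring
  have hJre : J.re = 0 := by
    have h : J + (starRingEnd ℂ) J = 0 := by
      rw [← hJconj, ← ID0]
      rw [integral_add ((hφ'c.mul hconjφc).integrableOn_compact isCompact_Icc :
          IntegrableOn (fun x => φ' x * (starRingEnd ℂ) (φ x)) I volume)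
        ((hφc.mul hconjφ'c).integrableOn_compact isCompact_Icc :
          IntegrableOn (fun x => φ x * (starRingEnd ℂ) (φ' x)) I volume)]
    have := congrArg Complex.re h
    simp only [Complex.add_re, Complex.conj_re, Complex.zero_re] at this
    linarith only [this]
  have hJim : J.im = lam.im * K := by
    have h := congrArg Complex.im EQ2
    simp only [Complex.add_im, Complex.ofReal_im, add_zero, Complex.neg_im, Complex.sub_im,
      Complex.mul_im, Complex.ofReal_re, mul_zero, add_zero, zero_sub, neg_neg] at h
    linarith only [h]
  have hReK : lam.re * K = X2 + R := by
    have h := congrArg Complex.re EQ2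
    simp only [Complex.add_re, Complex.ofReal_re, Complex.neg_re, Complex.sub_re,
      Complex.mul_re, Complex.ofReal_im, mul_zero, sub_zero, hJre, zero_add] at h
    linarith only [h]
  -- nonnegativity
  have hN2nn : 0 ≤ N2 := setIntegral_nonneg measurableSet_Icc fun x _ => sq_nonneg _
  have hD2nn : 0 ≤ D2 := setIntegral_nonneg measurableSet_Icc fun x _ => sq_nonneg _
  have hAnn : 0 ≤ A := setIntegral_nonneg measurableSet_Icc fun x _ =>
    mul_nonneg (le_max_right _ _) (sq_nonneg _)
  have hPnn : 0 ≤ P := setIntegral_nonneg measurableSet_Icc fun x _ =>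
    mul_nonneg (le_max_right _ _) (sq_nonneg _)
  have hQnnn : 0 ≤ Qn := setIntegral_nonneg measurableSet_Icc fun x _ => le_max_right _ _
  set N : ℝ := Real.sqrt N2 with hNdef
  set D : ℝ := Real.sqrt D2 with hDdef
  have hNsq : N ^ 2 = N2 := Real.sq_sqrt hN2nn
  have hDsq : D ^ 2 = D2 := Real.sq_sqrt hD2nn
  have hNnn : 0 ≤ N := Real.sqrt_nonneg _
  have hDnn : 0 ≤ D := Real.sqrt_nonneg _
  -- Cauchy-Schwarz
  have hCS : (∫ x in I, aφ x * aφ' x) ≤ N * D :=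
    cauchy_schwarz_Icc haφc haφ'c (fun x => norm_nonneg _)
      (fun x => norm_nonneg _)
  have hL1 : (∫ x in I, aφ' x) ≤ D * Real.sqrt 2 := by
    have h := cauchy_schwarz_Icc haφ'c (continuousOn_const (c := (1:ℝ)))
      (fun x => norm_nonneg _) (fun x => zero_le_one)
    have e1 : (∫ x in I, aφ' x * 1) = ∫ x in I, aφ' x := by simp
    have e2 : (∫ x in I, (1:ℝ) ^ 2) = 2 := by
      simp only [one_pow]
      rw [setIntegral_const, smul_eq_mul, mul_one, hI, Real.volume_real_Icc]
      norm_num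
    rw [e1, e2] at h
    exact h
  -- bound on |J|
  have hJbound : ‖J‖ ≤ N * D := by
    have h1 : ‖J‖ ≤ ∫ x in I, ‖φ' x * (starRingEnd ℂ) (φ x)‖ := by
      simpa using
        norm_integral_le_integral_norm (μ := volume.restrict I)
          (f := fun x => φ' x * (starRingEnd ℂ) (φ x))
    refine h1.trans ?_
    have h2 : (∫ x in I, ‖φ' x * (starRingEnd ℂ) (φ x)‖)
        = ∫ x in I, aφ x * aφ' x := by
      refine integral_congr_ae (Eventually.of_forall fun x => ?_)
      simp [map_mul, Complex.norm_conj, mul_comm, haφdef, haφ'def]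
    rw [h2]
    exact hCS
  -- Sobolev-type bound M² ≤ 2 N D
  have hx₀I' : x₀ ∈ I := hx₀I
  have hM2ND : M ^ 2 ≤ 2 * (N * D) := by
    have hsub2 : uIcc (-1:ℝ) x₀ ⊆ I := hsubI (-1) hm11 x₀ hx₀I'
    have hder : ∀ x ∈ uIcc (-1:ℝ) x₀, HasDerivAt (fun y => φ y * (starRingEnd ℂ) (φ y))
        (φ' x * (starRingEnd ℂ) (φ x) + φ x * (starRingEnd ℂ) (φ' x)) x := by
      intro x hx
      exact (hd x (hsub2 hx)).mul ((hd x (hsub2 hx)).star)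
    have hintc : IntervalIntegrable (fun x => φ' x * (starRingEnd ℂ) (φ x)
        + φ x * (starRingEnd ℂ) (φ' x)) volume (-1) x₀ :=
      (((hφ'c.mul hconjφc).add (hφc.mul hconjφ'c)).mono hsub2).intervalIntegrable
    have hFTC := intervalIntegral.integral_eq_sub_of_hasDerivAt hder hintc
    rw [hbm] at hFTC
    simp only [map_zero, mul_zero, sub_zero] at hFTC
    have hMsq : ((M ^ 2 : ℝ) : ℂ) = ∫ x in (-1:ℝ)..x₀, (φ' x * (starRingEnd ℂ) (φ x)
        + φ x * (starRingEnd ℂ) (φ' x)) := by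
      rw [hFTC, hmc x₀]
    have habs : M ^ 2 ≤ ∫ x in (-1:ℝ)..x₀, ‖φ' x * (starRingEnd ℂ) (φ x)
        + φ x * (starRingEnd ℂ) (φ' x)‖ := by
      have := intervalIntegral.norm_integral_le_integral_norm (μ := volume)
        (f := fun x => φ' x * (starRingEnd ℂ) (φ x) + φ x * (starRingEnd ℂ) (φ' x)) hx₀I'.1
      rw [← hMsq] at this
      simpa [_root_.abs_of_nonneg (sq_nonneg M)] using this
    have hmono : (∫ x in (-1:ℝ)..x₀, ‖φ' x * (starRingEnd ℂ) (φ x)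
        + φ x * (starRingEnd ℂ) (φ' x)‖) ≤ ∫ x in (-1:ℝ)..x₀, 2 * (aφ x * aφ' x) := by
      refine intervalIntegral.integral_mono_on hx₀I'.1 ?_ ?_ ?_
      · exact ((continuous_norm.comp_continuousOn
          ((hφ'c.mul hconjφc).add (hφc.mul hconjφ'c))).mono hsub2).intervalIntegrable
      · exact ((continuousOn_const.mul (haφc.mul haφ'c)).mono hsub2).intervalIntegrable
      · intro x hx
        calc ‖φ' x * (starRingEnd ℂ) (φ x) + φ x * (starRingEnd ℂ) (φ' x)‖
            ≤ ‖φ' x * (starRingEnd ℂ) (φ x)‖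
              + ‖φ x * (starRingEnd ℂ) (φ' x)‖ := norm_add_le _ _
          _ = 2 * (aφ x * aφ' x) := by
              simp [map_mul, Complex.norm_conj]; ring
    have hext : (∫ x in (-1:ℝ)..x₀, 2 * (aφ x * aφ' x)) ≤ ∫ x in I, 2 * (aφ x * aφ' x) := by
      rw [intervalIntegral.integral_of_le hx₀I'.1]
      refine setIntegral_mono_set ?_ ?_ ?_
      · exact (continuousOn_const.mul (haφc.mul haφ'c)).integrableOn_compact isCompact_Icc
      · exact Eventually.of_forall fun x => by positivity
      · exact HasSubset.Subset.eventuallyLE (by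
          rw [hI]; exact (Ioc_subset_Icc_self).trans (Icc_subset_Icc le_rfl hx₀I'.2))
    have hfin : (∫ x in I, 2 * (aφ x * aφ' x)) ≤ 2 * (N * D) := by
      rw [integral_const_mul]
      linarith only [hCS]
    linarith only [habs, hmono, hext, hfin]
  -- 2M ≤ ∫ |φ'|
  have h2M : 2 * M ≤ ∫ x in I, aφ' x := by
    have h1 : φ x₀ = ∫ x in (-1:ℝ)..x₀, φ' x := by
      rw [hftc (-1) hm11 x₀ hx₀I', hbm, sub_zero]
    have h2 : -φ x₀ = ∫ x in x₀..(1:ℝ), φ' x := by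
      rw [hftc x₀ hx₀I' 1 hp11, hbp, zero_sub]
    have hb1 : M ≤ ∫ x in (-1:ℝ)..x₀, aφ' x := by
      have := intervalIntegral.norm_integral_le_integral_norm (μ := volume) (f := φ') hx₀I'.1
      rw [← h1] at this
      simpa using this
    have hb2 : M ≤ ∫ x in x₀..(1:ℝ), aφ' x := by
      have := intervalIntegral.norm_integral_le_integral_norm (μ := volume) (f := φ') hx₀I'.2
      rw [← h2] at this
      simpa using this
    have hadd : (∫ x in (-1:ℝ)..x₀, aφ' x) + (∫ x in x₀..(1:ℝ), aφ' x)
        = ∫ x in I, aφ' x := by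
      rw [← interval_eq_Icc']
      refine intervalIntegral.integral_add_adjacent_intervals ?_ ?_
      · exact ((haφ'c.mono (hsubI (-1) hm11 x₀ hx₀I')).intervalIntegrable)
      · exact ((haφ'c.mono (hsubI x₀ hx₀I' 1 hp11)).intervalIntegrable)
    linarith only [hb1, hb2, hadd]
  have hM2D2 : M ^ 2 ≤ D2 / 2 := by
    have h1 : 2 * M ≤ D * Real.sqrt 2 := le_trans h2M hL1
    have h2 : (2 * M) ^ 2 ≤ (D * Real.sqrt 2) ^ 2 := by
      refine pow_le_pow_left₀ (by linarith [hM0]) h1 2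
    have h3 : (D * Real.sqrt 2) ^ 2 = D2 * 2 := by
      rw [mul_pow, hDsq, Real.sq_sqrt (by norm_num : (0:ℝ) ≤ 2)]
    have h4 : (2 * M) ^ 2 = 4 * M ^ 2 := by ring
    linarith only [h2, h3, h4]
  -- A ≤ Qn M²
  have hAQn : A ≤ Qn * M ^ 2 := by
    have h1 : A ≤ ∫ x in I, max (-(q x)) 0 * M ^ 2 := by
      refine setIntegral_mono_on hqmnsq (hqm.mul_const _) measurableSet_Icc ?_
      intro x hx
      exact mul_le_mul_of_nonneg_left
        (pow_le_pow_left₀ (norm_nonneg _) (hmax x hx) 2) (le_max_right _ _)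
    rw [integral_mul_const] at h1
    exact h1
  -- Qint = P - A
  have hQintPA : Qint = P - A := by
    have hpt : ∀ x ∈ I, q x * aφ x ^ 2
        = max (q x) 0 * aφ x ^ 2 - max (-(q x)) 0 * aφ x ^ 2 := by
      intro x _
      have : max (q x) 0 - max (-(q x)) 0 = q x := by
        rcases le_total (q x) 0 with h | h
        · simp [max_eq_right h, max_eq_left (neg_nonneg.mpr h)]
        · simp [max_eq_left h, max_eq_right (neg_nonpos.mpr h)]
      rw [← sub_mul, this]
    rw [hQintdef, setIntegral_congr_fun measurableSet_Icc hpt, integral_sub hqpnsq hqmnsq]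
  have hD2AP : D2 = A - P := by
    rw [hD2Q, hQintPA]; ring
  have hD2A : D2 ≤ A := by linarith only [hD2AP, hPnn]
  have hPA : P = A - D2 := by linarith only [hD2AP]
  -- |R| ≤ P + A
  have hRb : |R| ≤ P + A := by
    have h1 : |R| ≤ ∫ x in I, |x * q x * aφ x ^ 2| := by
      simpa only [Real.norm_eq_abs] using
        norm_integral_le_integral_norm (μ := volume.restrict I)
          (f := fun x => x * q x * aφ x ^ 2)
    refine h1.trans ?_
    have h2 : (∫ x in I, |x * q x * aφ x ^ 2|)
        ≤ ∫ x in I, (max (q x) 0 + max (-(q x)) 0) * aφ x ^ 2 := by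
      refine setIntegral_mono_on hxqnsq.abs
        (mul_contOn_integrableR (hqp.add hqm) haφ2c) measurableSet_Icc ?_
      intro x hx
      have hx1 : |x| ≤ 1 := abs_le.mpr ⟨hx.1, hx.2⟩
      have habsq : |q x| = max (q x) 0 + max (-(q x)) 0 := by
        rcases le_total (q x) 0 with h | h
        · rw [_root_.abs_of_nonpos h, max_eq_right h, max_eq_left (neg_nonneg.mpr h)]; ring
        · rw [_root_.abs_of_nonneg h, max_eq_left h, max_eq_right (neg_nonpos.mpr h)]; ring
      calc |x * q x * aφ x ^ 2| = |x| * |q x| * aφ x ^ 2 := by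
            rw [abs_mul, abs_mul, _root_.abs_of_nonneg (sq_nonneg (aφ x))]
        _ ≤ 1 * |q x| * aφ x ^ 2 :=
            mul_le_mul_of_nonneg_right
              (mul_le_mul_of_nonneg_right hx1 (abs_nonneg _)) (sq_nonneg _)
        _ = (max (q x) 0 + max (-(q x)) 0) * aφ x ^ 2 := by rw [one_mul, habsq]
    refine h2.trans ?_
    have h3 : (∫ x in I, (max (q x) 0 + max (-(q x)) 0) * aφ x ^ 2) = P + A := by
      have : ∀ x ∈ I, (max (q x) 0 + max (-(q x)) 0) * aφ x ^ 2
          = max (q x) 0 * aφ x ^ 2 + max (-(q x)) 0 * aφ x ^ 2 := fun x _ => by ring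
      rw [setIntegral_congr_fun measurableSet_Icc this, integral_add hqpnsq hqmnsq]
    rw [h3]
  -- |X2| ≤ D2
  have hX2b : |X2| ≤ D2 := by
    have h1 : |X2| ≤ ∫ x in I, |x * aφ' x ^ 2| := by
      simpa only [Real.norm_eq_abs] using
        norm_integral_le_integral_norm (μ := volume.restrict I)
          (f := fun x => x * aφ' x ^ 2)
    refine h1.trans ?_
    refine setIntegral_mono_on ?_ ?_ measurableSet_Icc ?_
    · exact ((hxc.mul haφ'2c).integrableOn_compact isCompact_Icc).abs
    · exact haφ'2c.integrableOn_compact isCompact_Icc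
    · intro x hx
      have hx1 : |x| ≤ 1 := abs_le.mpr ⟨hx.1, hx.2⟩
      rw [abs_mul, _root_.abs_of_nonneg (sq_nonneg (aφ' x))]
      simpa using mul_le_mul_of_nonneg_right hx1 (sq_nonneg (aφ' x))
  -- measurable version of w and the exceptional set
  obtain ⟨wm, hwm_meas, hwm_ae⟩ : ∃ wm : ℝ → ℝ, StronglyMeasurable wm ∧
      w =ᵐ[volume.restrict I] wm :=
    ⟨hw.1.mk w, hw.1.stronglyMeasurable_mk, hw.1.ae_eq_mk⟩
  set T' : Set ℝ := I ∩ {x | x * wm x < ε₁} with hT'def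
  have hT'subI : T' ⊆ I := inter_subset_left
  have hT'meas : MeasurableSet T' :=
    measurableSet_Icc.inter (measurableSet_lt (measurable_id.mul hwm_meas.measurable)
      measurable_const)
  set m : ℝ := (volume {x ∈ I | x * w x < ε₁}).toReal with hmdef
  have hmnn : 0 ≤ m := ENNReal.toReal_nonneg
  have hT'fin : volume T' < ⊤ :=
    lt_of_le_of_lt (measure_mono hT'subI) (by rw [hI]; exact measure_Icc_lt_top)
  have hT'le : (volume T').toReal ≤ m := by
    have hZ : (volume.restrict I) {x | ¬ w x = wm x} = 0 := ae_iff.mp hwm_ae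
    have hZ' : volume ({x | ¬ w x = wm x} ∩ I) = 0 := by
      rwa [Measure.restrict_apply' measurableSet_Icc] at hZ
    have hsub : T' ⊆ {x ∈ I | x * w x < ε₁} ∪ ({x | ¬ w x = wm x} ∩ I) := by
      rintro x ⟨hxI, hxlt⟩
      by_cases hwx : w x = wm x
      · left; exact ⟨hxI, by rw [hwx]; exact hxlt⟩
      · right; exact ⟨hwx, hxI⟩
    have h1 : volume T' ≤ volume {x ∈ I | x * w x < ε₁} := by
      calc volume T' ≤ volume ({x ∈ I | x * w x < ε₁} ∪ ({x | ¬ w x = wm x} ∩ I)) :=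
            measure_mono hsub
        _ ≤ volume {x ∈ I | x * w x < ε₁} + volume ({x | ¬ w x = wm x} ∩ I) :=
            measure_union_le _ _
        _ = volume {x ∈ I | x * w x < ε₁} := by rw [hZ', add_zero]
    refine ENNReal.toReal_mono ?_ h1
    exact (lt_of_le_of_lt (measure_mono (fun x hx => hx.1))
      (by rw [hI]; exact measure_Icc_lt_top)).ne
  -- lower bound for K
  have hKlow : ε₁ * N2 - ε₁ * M ^ 2 * m ≤ K := by
    have hcont_int : Integrable (fun x => ε₁ * aφ x ^ 2) (volume.restrict I) :=
      (continuousOn_const.mul haφ2c).integrableOn_compact isCompact_Icc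
    have hind_int : Integrable (T'.indicator (fun x => ε₁ * aφ x ^ 2)) (volume.restrict I) :=
      hcont_int.indicator hT'meas
    have hF_int : Integrable
        (fun x => ε₁ * aφ x ^ 2 - T'.indicator (fun y => ε₁ * aφ y ^ 2) x)
        (volume.restrict I) := hcont_int.sub hind_int
    have hle : (fun x => ε₁ * aφ x ^ 2 - T'.indicator (fun y => ε₁ * aφ y ^ 2) x)
        ≤ᵐ[volume.restrict I] fun x => x * w x * aφ x ^ 2 := by
      filter_upwards [hxw, hwm_ae, ae_restrict_mem measurableSet_Icc] with x h1 h2 h3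
      by_cases hx : x ∈ T'
      · simp only [indicator_of_mem hx, sub_self]
        exact mul_nonneg h1.le (sq_nonneg _)
      · simp only [indicator_of_notMem hx, sub_zero]
        have hge : ε₁ ≤ x * wm x := by
          by_contra hc; push_neg at hc; exact hx ⟨h3, hc⟩
        rw [← h2] at hge
        exact mul_le_mul_of_nonneg_right hge (sq_nonneg _)
    have hmono := integral_mono_ae hF_int hxwnsq hle
    have hFint_eq : (∫ x in I, (ε₁ * aφ x ^ 2 - T'.indicator (fun y => ε₁ * aφ y ^ 2) x))
        = ε₁ * N2 - ∫ x in T', ε₁ * aφ x ^ 2 := by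
      rw [integral_sub hcont_int hind_int, integral_indicator hT'meas,
        Measure.restrict_restrict hT'meas, inter_eq_left.mpr hT'subI, integral_const_mul]
    have hT'bound : (∫ x in T', ε₁ * aφ x ^ 2) ≤ ε₁ * M ^ 2 * m := by
      have h1 : (∫ x in T', ε₁ * aφ x ^ 2) ≤ |∫ x in T', ε₁ * aφ x ^ 2| := le_abs_self _
      have h2 : ‖∫ x in T', ε₁ * aφ x ^ 2‖ ≤ (ε₁ * M ^ 2) * (volume T').toReal := by
        refine norm_setIntegral_le_of_norm_le_const hT'fin ?_
        · intro x hx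
          rw [Real.norm_eq_abs, _root_.abs_of_nonneg (by positivity)]
          have := pow_le_pow_left₀ (norm_nonneg _) (hmax x (hT'subI hx)) 2
          exact mul_le_mul_of_nonneg_left this hε₁.le
      rw [Real.norm_eq_abs] at h2
      calc (∫ x in T', ε₁ * aφ x ^ 2) ≤ (ε₁ * M ^ 2) * (volume T').toReal :=
            le_trans h1 h2
        _ ≤ ε₁ * M ^ 2 * m := mul_le_mul_of_nonneg_left hT'le (by positivity)
    linarith only [hmono, hFint_eq, hT'bound]
  -- bounds coming from the identities
  have hReid : |lam.re| * K ≤ 2 * A := by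
    have h0 : |lam.re * K| ≤ |X2| + |R| := by rw [hReK]; exact abs_add_le _ _
    have h1 : |lam.re| * |K| ≤ |X2| + |R| := by rwa [abs_mul] at h0
    have h2 : |lam.re| * K ≤ |lam.re| * |K| :=
      mul_le_mul_of_nonneg_left (le_abs_self K) (abs_nonneg _)
    linarith only [h1, h2, hX2b, hRb, hPA]
  have hImid : |lam.im| * K ≤ N * D := by
    have h0 : |lam.im| * |K| = |J.im| := by rw [← abs_mul, hJim]
    have h1 : |J.im| ≤ ‖J‖ := Complex.abs_im_le_norm J
    have h2 : |lam.im| * K ≤ |lam.im| * |K| :=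
      mul_le_mul_of_nonneg_left (le_abs_self K) (abs_nonneg _)
    linarith only [h0, h1, h2, hJbound]
  -- translate the hypothesis hm
  have hQn_interval : (∫ x in (-1:ℝ)..1, max (-(q x)) 0) = Qn := interval_eq_Icc' _
  rw [hQn_interval] at hm
  have hmQ : 8 * Qn ^ 2 * m < 1 := hm
  -- final arithmetic
  have hfinal := final_arith (e := ε₁) (Q := Qn) (m := m) (M := M) (N := N) (D := D)
    (K := K) (A := A) (rr := lam.re) (ii := lam.im)
    hε₁ hQnnn hmnn hM0 hNnn hDnn
    hM2ND
    (by rw [hDsq]; exact hD2A)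
    hAQn
    (by rw [hDsq]; exact hM2D2)
    (by rw [hNsq]; exact hKlow)
    hReid hImid hmQ
  rw [hQn_interval]
  exact hfinal

end
end

section
/- Suppose q(−x) = q(x) and w(−x) = −w(x) for x ∈ [−1,1]. If λ = iα with α ∈ ℝ, α ≠ 0, is an eigenvalue of the Dirichlet problem −y'' + q y = λ w y on [−1,1] with eigenfunction φ, then there exists a complex constant C with |C| = 1 such that conj(φ(−x)) = C·φ(x) for all x ∈ [−1,1]. -/
open MeasureTheory Set Complex intervalIntegral Topology

noncomputable section


lemma conj_intervalIntegral (g : ℝ → ℂ) (a b : ℝ) :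
    (∫ t in a..b, (starRingEnd ℂ) (g t)) = (starRingEnd ℂ) (∫ t in a..b, g t) := by
  simp [intervalIntegral, integral_conj]

lemma ode_unique {a b : ℝ} (hab : a ≤ b) (H : ℝ → ℂ)
    (hH : IntegrableOn H (Icc a b))
    (y y' : ℝ → ℂ)
    (hy : ∀ x ∈ Icc a b, HasDerivAt y (y' x) x)
    (hy' : ∀ x ∈ Icc a b, y' x = ∫ t in a..x, H t * y t)
    (hya : y a = 0) :
    ∀ x ∈ Icc a b, y x = 0 := by
  have hycont : ContinuousOn y (Icc a b) := fun x hx =>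
    (hy x hx).continuousAt.continuousWithinAt
  have hHy : IntegrableOn (fun t => H t * y t) (Icc a b) :=
    hH.mul_continuousOn hycont isCompact_Icc
  have huIcc : uIcc a b = Icc a b := uIcc_of_le hab
  have hy'cont : ContinuousOn y' (Icc a b) := by
    have hP : ContinuousOn (fun x => ∫ t in a..x, H t * y t) (Icc a b) := by
      have := continuousOn_primitive_interval (μ := volume) (a := a) (b := b)
        (f := fun t => H t * y t) (by rwa [huIcc])
      rwa [huIcc] at this
    exact hP.congr hy'
  set S : Set ℝ := {x | x ∈ Icc a b ∧ ∀ t ∈ Icc a x, y t = 0} with hS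
  have haS : a ∈ S := ⟨⟨le_refl a, hab⟩, fun t ht => by
    have h : t = a := le_antisymm ht.2 ht.1
    rwa [h]⟩
  have hSne : S.Nonempty := ⟨a, haS⟩
  have hSbdd : BddAbove S := ⟨b, fun x hx => hx.1.2⟩
  have hac : a ≤ sSup S := le_csSup hSbdd haS
  have hcb : sSup S ≤ b := csSup_le hSne (fun x hx => hx.1.2)
  set c := sSup S with hc
  have hcIcc : c ∈ Icc a b := ⟨hac, hcb⟩
  have hzero_lt : ∀ t, a ≤ t → t < c → y t = 0 := by
    intro t hat htc
    obtain ⟨s, hsS, hts⟩ := exists_lt_of_lt_csSup hSne htc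
    exact hsS.2 t ⟨hat, hts.le⟩
  have hyc : y c = 0 := by
    rcases eq_or_lt_of_le hac with hat | hat
    · rw [← hat]; exact hya
    · have hclos : c ∈ closure (Ioo a c) := by
        rw [closure_Ioo (ne_of_lt hat)]; exact ⟨hac, le_refl c⟩
      haveI : (𝓝[Ioo a c] c).NeBot := mem_closure_iff_nhdsWithin_neBot.mp hclos
      have h1 : Filter.Tendsto y (𝓝[Ioo a c] c) (𝓝 (y c)) :=
        (hy c hcIcc).continuousAt.continuousWithinAt
      have h2 : Filter.Tendsto y (𝓝[Ioo a c] c) (𝓝 0) := by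
        apply Filter.Tendsto.congr' _ tendsto_const_nhds
        filter_upwards [self_mem_nhdsWithin] with s hs
        exact (hzero_lt s hs.1.le hs.2).symm
      exact tendsto_nhds_unique h1 h2
  have hzero : ∀ t ∈ Icc a c, y t = 0 := by
    intro t ht
    rcases lt_or_eq_of_le ht.2 with h | h
    · exact hzero_lt t ht.1 h
    · rw [h]; exact hyc
  have hcbeq : c = b := by
    by_contra hne
    have hclt : c < b := lt_of_le_of_ne hcb hne
    set T := ∫ t in Icc a b, ‖H t‖ with hT
    have hT0 : 0 ≤ T := setIntegral_nonneg measurableSet_Icc (fun t _ => norm_nonneg _)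
    have h2T : (0:ℝ) < 2*(T+1) := by positivity
    set d := min b (c + 1/(2*(T+1))) with hd
    have hcd : c < d := by
      apply lt_min hclt
      have : 0 < 1/(2*(T+1)) := by positivity
      linarith
    have hdb : d ≤ b := min_le_left _ _
    have hdc : d - c ≤ 1/(2*(T+1)) := by
      have := min_le_right b (c + 1/(2*(T+1)))
      simp only [← hd] at this; linarith
    have hsub : Icc c d ⊆ Icc a b := Icc_subset_Icc hac hdb
    obtain ⟨z, hz, hzmax⟩ := isCompact_Icc.exists_isMaxOn (nonempty_Icc.mpr hcd.le)
      ((hycont.mono hsub).norm)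
    set M := ‖y z‖ with hM
    have hM0 : 0 ≤ M := norm_nonneg _
    have key : ∀ x ∈ Icc c d, ‖y x‖ ≤ (T * M) * (d - c) := by
      intro x hx
      have hxab : x ∈ Icc a b := hsub hx
      have hy'bound : ∀ t ∈ Icc c x, ‖y' t‖ ≤ T * M := by
        intro t ht
        have htab : t ∈ Icc a b := hsub ⟨ht.1, le_trans ht.2 hx.2⟩
        have h0 : (∫ s in a..c, H s * y s) = 0 := by
          have heq : EqOn (fun s => H s * y s) (fun _ => (0:ℂ)) (uIcc a c) := by
            intro s hs
            rw [uIcc_of_le hac] at hs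
            simp [hzero s hs]
          rw [integral_congr heq]
          simp
        have hadd : (∫ s in a..c, H s * y s) + (∫ s in c..t, H s * y s)
            = ∫ s in a..t, H s * y s := by
          apply integral_add_adjacent_intervals
          · exact (hHy.mono_set (by rw [uIcc_of_le hac]; exact Icc_subset_Icc_right hcb)).intervalIntegrable
          · exact (hHy.mono_set (by rw [uIcc_of_le ht.1]; exact Icc_subset_Icc hac htab.2)).intervalIntegrable
        have hsplit : y' t = ∫ s in c..t, H s * y s := by
          rw [hy' t htab, ← hadd, h0, zero_add]
        have h1 : ‖y' t‖ ≤ ∫ s in c..t, ‖H s * y s‖ := by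
          rw [hsplit]; exact norm_integral_le_integral_norm ht.1
        have hHyn : IntegrableOn (fun s => ‖H s * y s‖) (Icc a b) := hHy.norm
        have hHnM : IntegrableOn (fun s => ‖H s‖ * M) (Icc a b) := hH.norm.mul_const M
        have h2 : (∫ s in c..t, ‖H s * y s‖) ≤ ∫ s in c..t, ‖H s‖ * M := by
          apply integral_mono_on ht.1
          · exact (hHyn.mono_set (by rw [uIcc_of_le ht.1]; exact Icc_subset_Icc hac htab.2)).intervalIntegrable
          · exact (hHnM.mono_set (by rw [uIcc_of_le ht.1]; exact Icc_subset_Icc hac htab.2)).intervalIntegrable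
          · intro s hs
            have hsM : ‖y s‖ ≤ M := hzmax ⟨hs.1, le_trans hs.2 (le_trans ht.2 hx.2)⟩
            calc ‖H s * y s‖ = ‖H s‖ * ‖y s‖ := norm_mul _ _
              _ ≤ ‖H s‖ * M := mul_le_mul_of_nonneg_left hsM (norm_nonneg _)
        have h3 : (∫ s in c..t, ‖H s‖ * M) = (∫ s in c..t, ‖H s‖) * M :=
          integral_mul_const M _
        have h4 : (∫ s in c..t, ‖H s‖) ≤ T := by
          rw [intervalIntegral.integral_of_le ht.1]
          apply setIntegral_mono_set hH.norm
          · exact Filter.Eventually.of_forall (fun s => norm_nonneg _)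
          · exact HasSubset.Subset.eventuallyLE (fun s hs =>
              ⟨le_trans hac (le_of_lt hs.1), le_trans hs.2 htab.2⟩)
        calc ‖y' t‖ ≤ (∫ s in c..t, ‖H s‖) * M := by rw [← h3]; exact le_trans h1 h2
          _ ≤ T * M := mul_le_mul_of_nonneg_right h4 hM0
      have hftc : (∫ t in c..x, y' t) = y x - y c := by
        apply integral_eq_sub_of_hasDerivAt
        · intro t ht
          rw [uIcc_of_le hx.1] at ht
          exact hy t (hsub ⟨ht.1, le_trans ht.2 hx.2⟩)
        · apply ContinuousOn.intervalIntegrable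
          apply hy'cont.mono
          rw [uIcc_of_le hx.1]
          exact fun s hs => hsub ⟨hs.1, le_trans hs.2 hx.2⟩
      have hyx : y x = ∫ t in c..x, y' t := by rw [hftc, hyc, sub_zero]
      have hb : ‖∫ t in c..x, y' t‖ ≤ (T*M) * |x - c| := by
        apply intervalIntegral.norm_integral_le_of_norm_le_const
        intro t ht
        rw [uIoc_of_le hx.1] at ht
        exact hy'bound t ⟨ht.1.le, ht.2⟩
      rw [hyx]
      calc ‖∫ t in c..x, y' t‖ ≤ (T*M) * |x - c| := hb
        _ ≤ (T*M) * (d - c) := by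
            apply mul_le_mul_of_nonneg_left _ (mul_nonneg hT0 hM0)
            rw [_root_.abs_of_nonneg (by linarith [hx.1] : (0:ℝ) ≤ x - c)]
            linarith [hx.2]
    have hMle : M ≤ (T*M) * (d - c) := key z hz
    have hdc1 : (d - c) * (2*(T+1)) ≤ 1 := by
      rw [← le_div_iff₀ h2T]; linarith
    have hM00 : M ≤ 0 := by nlinarith [mul_nonneg hT0 hM0, mul_nonneg (mul_nonneg hT0 hM0) (le_of_lt (sub_pos.mpr hcd))]
    have hdS : d ∈ S := by
      refine ⟨⟨le_trans hac hcd.le, hdb⟩, fun t ht => ?_⟩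
      rcases le_or_gt t c with h | h
      · exact hzero t ⟨ht.1, h⟩
      · have : ‖y t‖ ≤ M := hzmax ⟨h.le, ht.2⟩
        have : ‖y t‖ ≤ 0 := le_trans this hM00
        simpa using le_antisymm this (norm_nonneg _)
    have : d ≤ c := le_csSup hSbdd hdS
    linarith
  intro x hx
  exact hzero x ⟨hx.1, by rw [hcbeq]; exact hx.2⟩


/-- under the symmetry conditions, an eigenfunction `φ` of a nonzero
purely imaginary eigenvalue `iα` satisfies `conj (φ (-x)) = C φ(x)` for some
unimodular constant `C`. -/
theorem imaginary_eigenfunction_symmetry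
    (q w : ℝ → ℝ)
    (hq : IntegrableOn q (Icc (-1:ℝ) 1))
    (hw : IntegrableOn w (Icc (-1:ℝ) 1))
    (hw0 : ∀ᵐ x ∂(volume.restrict (Icc (-1:ℝ) 1)), w x ≠ 0)
    (hsign : 0 < volume {x ∈ Icc (-1:ℝ) 1 | 0 < w x} ∧
             0 < volume {x ∈ Icc (-1:ℝ) 1 | w x < 0})
    (hqsym : ∀ x ∈ Icc (-1:ℝ) 1, q (-x) = q x)
    (hwsym : ∀ x ∈ Icc (-1:ℝ) 1, w (-x) = -w x)
    (α : ℝ) (hα : α ≠ 0) (φ φ' : ℝ → ℂ)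
    (heig : IsEigenpair q w (Complex.I * (α : ℂ)) φ φ') :
    ∃ C : ℂ, ‖C‖ = 1 ∧
      ∀ x ∈ Icc (-1:ℝ) 1, (starRingEnd ℂ) (φ (-x)) = C * φ x := by
  obtain ⟨hφd, hφ', hφm1, hφ1, x0, hx0, hφx0⟩ := heig
  set lam : ℂ := Complex.I * (α : ℂ) with hlam
  have hconjlam : (starRingEnd ℂ) lam = -lam := by
    simp [hlam, Complex.conj_I]
  set H : ℝ → ℂ := fun t => (q t : ℂ) - lam * (w t : ℂ) with hHdef
  have hHint : IntegrableOn H (Icc (-1:ℝ) 1) := hq.ofReal.sub (hw.ofReal.const_mul lam)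
  have hmem : ∀ x ∈ Icc (-1:ℝ) 1, -x ∈ Icc (-1:ℝ) 1 := fun x hx =>
    ⟨by linarith [hx.2], by linarith [hx.1]⟩
  have hm1 : (-1:ℝ) ∈ Icc (-1:ℝ) 1 := ⟨le_refl _, by norm_num⟩
  have h1m : (1:ℝ) ∈ Icc (-1:ℝ) 1 := ⟨by norm_num, le_refl _⟩
  have hφcont : ContinuousOn φ (Icc (-1:ℝ) 1) := fun x hx =>
    (hφd x hx).continuousAt.continuousWithinAt
  have hφint : IntegrableOn (fun t => H t * φ t) (Icc (-1:ℝ) 1) :=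
    hHint.mul_continuousOn hφcont isCompact_Icc
  have hφii : ∀ u ∈ Icc (-1:ℝ) 1, ∀ v ∈ Icc (-1:ℝ) 1,
      IntervalIntegrable (fun t => H t * φ t) volume u v := fun u hu v hv =>
    (hφint.mono_set (uIcc_subset_Icc hu hv)).intervalIntegrable
  have hφ'' : ∀ u ∈ Icc (-1:ℝ) 1, φ' u = φ' (-1) + ∫ t in (-1:ℝ)..u, H t * φ t := by
    intro u hu
    rw [hφ' u hu]
    congr 1
    apply intervalIntegral.integral_congr
    intro t _
    simp only [hHdef]
    ring
  have hkey : ∀ v ∈ Icc (-1:ℝ) 1, (∫ t in v..(1:ℝ), H t * φ t) = φ' 1 - φ' v := by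
    intro v hv
    have h1 := hφ'' 1 h1m
    have h2 := hφ'' v hv
    have hadj := intervalIntegral.integral_add_adjacent_intervals
      (hφii _ hm1 _ hv) (hφii _ hv _ h1m)
    rw [h1, h2]
    linear_combination hadj
  -- the reflected conjugate function
  set ψ : ℝ → ℂ := fun x => (starRingEnd ℂ) (φ (-x)) with hψdef
  set ψ' : ℝ → ℂ := fun x => -(starRingEnd ℂ) (φ' (-x)) with hψ'def
  have hψd : ∀ x ∈ Icc (-1:ℝ) 1, HasDerivAt ψ (ψ' x) x := by
    intro x hx
    have h1 : HasDerivAt (fun s : ℝ => φ (-s)) (-φ' (-x)) x := by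
      simpa [Function.comp_def] using (hφd (-x) (hmem x hx)).scomp x (hasDerivAt_neg x)
    simpa [Function.comp_def, Complex.conjCAE_apply] using Complex.conjCLE.toContinuousLinearMap.hasFDerivAt.comp_hasDerivAt x h1
  have hψcont : ContinuousOn ψ (Icc (-1:ℝ) 1) := fun x hx =>
    (hψd x hx).continuousAt.continuousWithinAt
  have hψint : IntegrableOn (fun t => H t * ψ t) (Icc (-1:ℝ) 1) :=
    hHint.mul_continuousOn hψcont isCompact_Icc
  have hψii : ∀ u ∈ Icc (-1:ℝ) 1, ∀ v ∈ Icc (-1:ℝ) 1,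
      IntervalIntegrable (fun t => H t * ψ t) volume u v := fun u hu v hv =>
    (hψint.mono_set (uIcc_subset_Icc hu hv)).intervalIntegrable
  have hψ'm1 : ψ' (-1) = -(starRingEnd ℂ) (φ' 1) := by simp [hψ'def]
  have hψ'' : ∀ x ∈ Icc (-1:ℝ) 1, ψ' x = ψ' (-1) + ∫ t in (-1:ℝ)..x, H t * ψ t := by
    intro x hx
    have hcongr : (∫ t in (-1:ℝ)..x, H t * ψ t)
        = ∫ t in (-1:ℝ)..x, (starRingEnd ℂ) (H (-t) * φ (-t)) := by
      apply intervalIntegral.integral_congr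
      intro t ht
      rw [uIcc_of_le hx.1] at ht
      have htI : t ∈ Icc (-1:ℝ) 1 := ⟨ht.1, le_trans ht.2 hx.2⟩
      have hHt : H (-t) = (q t : ℂ) + lam * (w t : ℂ) := by
        simp only [hHdef, hqsym t htI, hwsym t htI]
        push_cast
        ring
      have hcj : (starRingEnd ℂ) ((q t : ℂ) + lam * (w t : ℂ)) = H t := by
        simp only [map_add, map_mul, hconjlam, Complex.conj_ofReal, hHdef]
        ring
      show H t * ψ t = (starRingEnd ℂ) (H (-t) * φ (-t))
      rw [map_mul, hHt, hcj]
    have hconj2 : (∫ t in (-1:ℝ)..x, (starRingEnd ℂ) (H (-t) * φ (-t)))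
        = (starRingEnd ℂ) (∫ t in (-1:ℝ)..x, H (-t) * φ (-t)) :=
      conj_intervalIntegral _ _ _
    have hneg : (∫ t in (-1:ℝ)..x, H (-t) * φ (-t)) = ∫ s in (-x)..(1:ℝ), H s * φ s := by
      have := intervalIntegral.integral_comp_neg (a := (-1:ℝ)) (b := x) (fun s => H s * φ s)
      simpa using this
    rw [hcongr, hconj2, hneg, hkey (-x) (hmem x hx), hψ'm1]
    show -(starRingEnd ℂ) (φ' (-x)) = _
    rw [map_sub]
    ring
  -- φ'(-1) ≠ 0
  have hφ'ne : φ' (-1) ≠ 0 := by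
    intro h0
    have hzero := ode_unique (by norm_num) H hHint φ φ' hφd
      (fun x hx => by rw [hφ'' x hx, h0, zero_add]) hφm1
    exact hφx0 (hzero x0 hx0)
  set C : ℂ := ψ' (-1) / φ' (-1) with hCdef
  have hCeq : C * φ' (-1) = ψ' (-1) := div_mul_cancel₀ _ hφ'ne
  set η : ℝ → ℂ := fun x => ψ x - C * φ x with hηdef
  set η' : ℝ → ℂ := fun x => ψ' x - C * φ' x with hη'def
  have hηd : ∀ x ∈ Icc (-1:ℝ) 1, HasDerivAt η (η' x) x := fun x hx =>
    (hψd x hx).sub ((hφd x hx).const_mul C)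
  have hη' : ∀ x ∈ Icc (-1:ℝ) 1, η' x = ∫ t in (-1:ℝ)..x, H t * η t := by
    intro x hx
    have hint : (∫ t in (-1:ℝ)..x, H t * η t)
        = (∫ t in (-1:ℝ)..x, H t * ψ t) - C * ∫ t in (-1:ℝ)..x, H t * φ t := by
      rw [← intervalIntegral.integral_const_mul,
        ← intervalIntegral.integral_sub (hψii _ hm1 _ hx) ((hφii _ hm1 _ hx).const_mul C)]
      apply intervalIntegral.integral_congr
      intro t _
      simp only [hηdef]
      ring
    rw [hint]
    show ψ' x - C * φ' x = _
    rw [hψ'' x hx, hφ'' x hx]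
    rw [mul_add, ← hCeq]
    ring
  have hηm1 : η (-1) = 0 := by
    simp [hηdef, hψdef, hφm1, hφ1]
  have hηzero := ode_unique (by norm_num) H hHint η η' hηd hη' hηm1
  have hid : ∀ x ∈ Icc (-1:ℝ) 1, (starRingEnd ℂ) (φ (-x)) = C * φ x := by
    intro x hx
    have := hηzero x hx
    simp only [hηdef, hψdef] at this
    exact sub_eq_zero.mp this
  refine ⟨C, ?_, hid⟩
  -- |C| = 1
  have h1 : (starRingEnd ℂ) (φ x0) = C * φ (-x0) := by
    have := hid (-x0) (hmem x0 hx0)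
    simpa [neg_neg] using this
  have hφnegne : φ (-x0) ≠ 0 := by
    intro h
    rw [h, mul_zero] at h1
    exact hφx0 (by simpa using congrArg (starRingEnd ℂ) h1)
  have h2 : (starRingEnd ℂ) (φ (-x0)) = C * φ x0 := hid x0 hx0
  have h3 : φ (-x0) = (starRingEnd ℂ) C * (C * φ (-x0)) := by
    have := congrArg (starRingEnd ℂ) h2
    rw [map_mul] at this
    simpa [h1] using this
  have h4 : (starRingEnd ℂ) C * C = 1 := by
    have h5 : ((starRingEnd ℂ) C * C) * φ (-x0) = 1 * φ (-x0) := by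
      rw [one_mul, mul_assoc]; exact h3.symm
    exact mul_right_cancel₀ hφnegne h5
  have h6 : (Complex.normSq C : ℂ) = 1 := by
    rw [← Complex.mul_conj]
    rw [mul_comm] at h4
    exact h4
  have h7 : Complex.normSq C = 1 := by exact_mod_cast h6
  rw [Complex.norm_def, h7, Real.sqrt_one]
end
end

section
/- Let λ be an eigenvalue of the Dirichlet problem −y'' + q y = λ w y on [−1,1] with eigenfunction φ, and suppose in addition that w is absolutely continuous on [−1,1] with w' ∈ L²[−1,1]. Then ∫_{−1}^1 w(x)|φ'(x)|² dx + ∫_{−1}^1 w'(x)φ'(x)·conj(φ(x)) dx + ∫_{−1}^1 w(x)q(x)|φ(x)|² dx = λ·∫_{−1}^1 w(x)²|φ(x)|² dx. -/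
open MeasureTheory Set Complex

noncomputable section

/-- `(‖z‖ : ℂ)^2 = z * conj z`. -/
lemma normc_sq (z : ℂ) : (‖z‖ : ℂ) ^ 2 = z * (starRingEnd ℂ) z := by
  rw [← Complex.ofReal_pow, Complex.mul_conj]
  norm_cast
  rw [Complex.normSq_eq_norm_sq]

/-- A primitive of an integrable function, multiplied by an integrable function,
is integrable. -/
lemma integrable_prim_mul {a b : ℝ} {g f : ℝ → ℂ} (hg : IntegrableOn g (Icc a b))
    (hf : IntegrableOn f (Ioc a b)) :
    IntegrableOn (fun x => (∫ t in Ioc a x, g t) * f x) (Ioc a b) := by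
  have hB : ContinuousOn (fun x => ∫ t in Ioc a x, g t) (Icc a b) :=
    intervalIntegral.continuousOn_primitive hg
  have hmeas : AEStronglyMeasurable (fun x => ∫ t in Ioc a x, g t)
      (volume.restrict (Ioc a b)) :=
    (hB.aestronglyMeasurable measurableSet_Icc).mono_measure
      (Measure.restrict_mono Ioc_subset_Icc_self le_rfl)
  have hbd : ∀ᵐ x ∂(volume.restrict (Ioc a b)),
      ‖∫ t in Ioc a x, g t‖ ≤ ∫ t in Ioc a b, ‖g t‖ := by
    refine (ae_restrict_iff' measurableSet_Ioc).2 (Filter.Eventually.of_forall fun x hx => ?_)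
    refine (norm_integral_le_integral_norm _).trans ?_
    exact setIntegral_mono_set (IntegrableOn.mono_set hg.norm Ioc_subset_Icc_self)
      (Filter.Eventually.of_forall fun t => norm_nonneg _)
      (HasSubset.Subset.eventuallyLE (Ioc_subset_Ioc le_rfl hx.2))
  exact hf.bdd_mul hmeas hbd

/-- Fubini-based integration by parts for indefinite integrals. -/
lemma fubini_ibp {a b : ℝ} (hab : a ≤ b) {g1 g2 : ℝ → ℂ}
    (h1 : IntegrableOn g1 (Icc a b)) (h2 : IntegrableOn g2 (Icc a b)) :
    (∫ x in Ioc a b, (∫ t in Ioc a x, g1 t) * g2 x)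
      = (∫ t in Ioc a b, g1 t) * (∫ t in Ioc a b, g2 t)
        - ∫ x in Ioc a b, g1 x * ∫ t in Ioc a x, g2 t := by
  have h1' := h1.mono_set (Ioc_subset_Icc_self (a := a) (b := b))
  have h2' := h2.mono_set (Ioc_subset_Icc_self (a := a) (b := b))
  set μ := volume.restrict (Ioc a b) with hμ
  set s : Set (ℝ × ℝ) := {p : ℝ × ℝ | p.2 ≤ p.1} with hs
  have hsm : MeasurableSet s := measurableSet_le measurable_snd measurable_fst
  set F : ℝ → ℝ → ℂ := fun x t => s.indicator (fun p => g1 p.2 * g2 p.1) (x, t) with hF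
  have hFint : Integrable (Function.uncurry F) (μ.prod μ) := by
    have heq : Function.uncurry F = s.indicator (fun p => g1 p.2 * g2 p.1) := by
      funext p; cases p; rfl
    rw [heq]
    have hbase : Integrable (fun z : ℝ × ℝ => g2 z.1 * g1 z.2) (μ.prod μ) :=
      h2'.mul_prod h1'
    have hbase' : Integrable (fun z : ℝ × ℝ => g1 z.2 * g2 z.1) (μ.prod μ) := by
      simpa [mul_comm] using hbase
    exact hbase'.indicator hsm
  have step1 : (∫ x in Ioc a b, (∫ t in Ioc a x, g1 t) * g2 x)
      = ∫ x, (∫ t, F x t ∂μ) ∂μ := by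
    refine setIntegral_congr_fun measurableSet_Ioc fun x hx => ?_
    have hFx : (fun t => F x t) = (Iic x).indicator (fun t => g1 t * g2 x) := by
      funext t
      by_cases h : t ≤ x <;> simp [hF, hs, Set.indicator_apply, h]
    rw [hFx, integral_indicator measurableSet_Iic, hμ,
      Measure.restrict_restrict measurableSet_Iic,
      show Iic x ∩ Ioc a b = Ioc a x from by
        ext t
        simp only [mem_inter_iff, mem_Iic, mem_Ioc]
        exact ⟨fun h => ⟨h.2.1, h.1⟩, fun h => ⟨h.2, h.1, h.2.trans hx.2⟩⟩]
    exact (integral_mul_const _ _).symm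
  have step3 : (∫ t, (∫ x, F x t ∂μ) ∂μ)
      = ∫ t in Ioc a b, g1 t * ((∫ x in Ioc a b, g2 x) - ∫ x in Ioc a t, g2 x) := by
    refine setIntegral_congr_fun measurableSet_Ioc fun t ht => ?_
    have hFt : (fun x => F x t) = (Ici t).indicator (fun x => g1 t * g2 x) := by
      funext x
      by_cases h : t ≤ x <;> simp [hF, hs, Set.indicator_apply, h]
    rw [hFt, integral_indicator measurableSet_Ici, hμ,
      Measure.restrict_restrict measurableSet_Ici,
      show Ici t ∩ Ioc a b = Icc t b from by
        ext x
        simp only [mem_inter_iff, mem_Ici, mem_Icc, mem_Ioc]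
        exact ⟨fun h => ⟨h.1, h.2.2⟩, fun h => ⟨h.1, ht.1.trans_le h.1, h.2⟩⟩,
      integral_Icc_eq_integral_Ioc, integral_const_mul]
    have hsplit : (∫ x in Ioc a t, g2 x) + ∫ x in Ioc t b, g2 x = ∫ x in Ioc a b, g2 x := by
      rw [← setIntegral_union (Ioc_disjoint_Ioc_of_le le_rfl) measurableSet_Ioc
        (h2'.mono_set (Ioc_subset_Ioc le_rfl ht.2))
        (h2'.mono_set (Ioc_subset_Ioc ht.1.le le_rfl)),
        Ioc_union_Ioc_eq_Ioc ht.1.le ht.2]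
    have : (∫ x in Ioc t b, g2 x) = (∫ x in Ioc a b, g2 x) - ∫ x in Ioc a t, g2 x := by
      rw [← hsplit]; ring
    rw [this]
  have iB : IntegrableOn (fun t => g1 t * ∫ x in Ioc a t, g2 x) (Ioc a b) := by
    have := integrable_prim_mul h2 h1'
    simpa [mul_comm] using this
  have step4 : (∫ t in Ioc a b, g1 t * ((∫ x in Ioc a b, g2 x) - ∫ x in Ioc a t, g2 x))
      = (∫ t in Ioc a b, g1 t) * (∫ x in Ioc a b, g2 x)
        - ∫ t in Ioc a b, g1 t * ∫ x in Ioc a t, g2 x := by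
    simp_rw [mul_sub]
    rw [integral_sub (h1'.mul_const _) iB, integral_mul_const]
  rw [step1, integral_integral_swap hFint, step3, step4]

/-- Integration by parts for two functions given as indefinite integrals. -/
lemma rep_ibp {a b : ℝ} (hab : a ≤ b) {u v g1 g2 : ℝ → ℂ}
    (h1 : IntegrableOn g1 (Icc a b)) (h2 : IntegrableOn g2 (Icc a b))
    (hu : ∀ x ∈ Icc a b, u x = u a + ∫ t in Ioc a x, g1 t)
    (hv : ∀ x ∈ Icc a b, v x = v a + ∫ t in Ioc a x, g2 t) :
    (∫ x in Ioc a b, (u x * g2 x + g1 x * v x)) = u b * v b - u a * v a := by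
  have h1' := h1.mono_set (Ioc_subset_Icc_self (a := a) (b := b))
  have h2' := h2.mono_set (Ioc_subset_Icc_self (a := a) (b := b))
  have iA : IntegrableOn (fun x => (∫ t in Ioc a x, g1 t) * g2 x) (Ioc a b) :=
    integrable_prim_mul h1 h2'
  have iB : IntegrableOn (fun x => g1 x * ∫ t in Ioc a x, g2 t) (Ioc a b) := by
    simpa [mul_comm] using integrable_prim_mul h2 h1'
  have key := fubini_ibp hab h1 h2
  have congr1 : (∫ x in Ioc a b, (u x * g2 x + g1 x * v x))
      = ∫ x in Ioc a b, ((u a * g2 x + (∫ t in Ioc a x, g1 t) * g2 x)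
          + (g1 x * v a + g1 x * ∫ t in Ioc a x, g2 t)) := by
    refine setIntegral_congr_fun measurableSet_Ioc fun x hx => ?_
    rw [hu x (Ioc_subset_Icc_self hx), hv x (Ioc_subset_Icc_self hx)]; ring
  have ia : Integrable (fun x => u a * g2 x + (∫ t in Ioc a x, g1 t) * g2 x)
      (volume.restrict (Ioc a b)) := (h2'.const_mul _).add iA
  have ib : Integrable (fun x => g1 x * v a + g1 x * ∫ t in Ioc a x, g2 t)
      (volume.restrict (Ioc a b)) := (h1'.mul_const _).add iB
  rw [congr1, integral_add ia ib,
    integral_add (h2'.const_mul _) iA, integral_add (h1'.mul_const _) iB,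
    integral_const_mul, integral_mul_const, key,
    hu b ⟨hab, le_rfl⟩, hv b ⟨hab, le_rfl⟩]
  ring

/-- the identity obtained by multiplying the equation by `w ⬝ conj φ`
and integrating by parts, when `w` is absolutely continuous with `w' ∈ L²`. -/
theorem weighted_energy_identity
    (q w w' : ℝ → ℝ)
    (hq : IntegrableOn q (Icc (-1:ℝ) 1))
    (hw : IntegrableOn w (Icc (-1:ℝ) 1))
    (hw0 : ∀ᵐ x ∂(volume.restrict (Icc (-1:ℝ) 1)), w x ≠ 0)
    (hsign : 0 < volume {x ∈ Icc (-1:ℝ) 1 | 0 < w x} ∧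
             0 < volume {x ∈ Icc (-1:ℝ) 1 | w x < 0})
    (hw'int : IntegrableOn w' (Icc (-1:ℝ) 1))
    (hw'sq : IntegrableOn (fun x => (w' x) ^ 2) (Icc (-1:ℝ) 1))
    (hac : ∀ x ∈ Icc (-1:ℝ) 1, w x = w (-1) + ∫ t in (-1:ℝ)..x, w' t)
    (lam : ℂ) (φ φ' : ℝ → ℂ) (heig : IsEigenpair q w lam φ φ') :
    (∫ x in (-1:ℝ)..1, (w x : ℂ) * (‖φ' x‖ : ℂ) ^ 2) +
      (∫ x in (-1:ℝ)..1, (w' x : ℂ) * φ' x * (starRingEnd ℂ) (φ x)) +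
      (∫ x in (-1:ℝ)..1, (w x : ℂ) * (q x : ℂ) * (‖φ x‖ : ℂ) ^ 2) =
    lam * ∫ x in (-1:ℝ)..1, (w x : ℂ) ^ 2 * (‖φ x‖ : ℂ) ^ 2 := by
  obtain ⟨hder, hode, hbc1, hbc2, -⟩ := heig
  have hone : (-1:ℝ) ≤ 1 := by norm_num
  set ψ : ℝ → ℂ := fun t => (q t : ℂ) * φ t - lam * (w t : ℂ) * φ t with hψdef
  -- continuity and boundedness of φ
  have hφcont : ContinuousOn φ (Icc (-1:ℝ) 1) := fun x hx =>
    (hder x hx).continuousAt.continuousWithinAt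
  have hφmeas : AEStronglyMeasurable φ (volume.restrict (Icc (-1:ℝ) 1)) :=
    hφcont.aestronglyMeasurable measurableSet_Icc
  obtain ⟨Cφ, hCφ⟩ := isCompact_Icc.exists_bound_of_continuousOn hφcont
  have hφbd : ∀ᵐ x ∂(volume.restrict (Icc (-1:ℝ) 1)), ‖φ x‖ ≤ Cφ :=
    (ae_restrict_iff' measurableSet_Icc).2 (Filter.Eventually.of_forall fun x hx => hCφ x hx)
  -- integrability of ψ
  have hqφ : IntegrableOn (fun x => (q x : ℂ) * φ x) (Icc (-1:ℝ) 1) := by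
    have := ((hq.ofReal (𝕜 := ℂ)).bdd_mul hφmeas hφbd :
      Integrable (fun x => φ x * (q x : ℂ)) _)
    simpa [mul_comm, IntegrableOn] using this
  have hwφ0 : IntegrableOn (fun x => (w x : ℂ) * φ x) (Icc (-1:ℝ) 1) := by
    have := ((hw.ofReal (𝕜 := ℂ)).bdd_mul hφmeas hφbd :
      Integrable (fun x => φ x * (w x : ℂ)) _)
    simpa [mul_comm, IntegrableOn] using this
  have hψint : IntegrableOn ψ (Icc (-1:ℝ) 1) := by
    refine hqφ.sub ?_
    simpa [mul_assoc, IntegrableOn] using hwφ0.const_mul lam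
  -- ode in `Ioc` form
  have hodeI : ∀ x ∈ Icc (-1:ℝ) 1, φ' x = φ' (-1) + ∫ t in Ioc (-1:ℝ) x, ψ t := by
    intro x hx
    rw [hode x hx, intervalIntegral.integral_of_le hx.1]
  -- continuity and boundedness of φ'
  have hφ'cont : ContinuousOn φ' (Icc (-1:ℝ) 1) := by
    have : ContinuousOn (fun x => φ' (-1) + ∫ t in Ioc (-1:ℝ) x, ψ t) (Icc (-1:ℝ) 1) :=
      continuousOn_const.add (intervalIntegral.continuousOn_primitive hψint)
    exact this.congr fun x hx => hodeI x hx
  have hφ'conjcont : ContinuousOn (fun t => (starRingEnd ℂ) (φ' t)) (Icc (-1:ℝ) 1) :=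
    Complex.continuous_conj.comp_continuousOn hφ'cont
  have hφconjcont : ContinuousOn (fun t => (starRingEnd ℂ) (φ t)) (Icc (-1:ℝ) 1) :=
    Complex.continuous_conj.comp_continuousOn hφcont
  -- representation of φ and conj φ
  have hφrep : ∀ x ∈ Icc (-1:ℝ) 1, φ x = φ (-1) + ∫ t in Ioc (-1:ℝ) x, φ' t := by
    intro x hx
    have hsub : Icc (-1:ℝ) x ⊆ Icc (-1:ℝ) 1 := Icc_subset_Icc le_rfl hx.2
    have huIcc : uIcc (-1:ℝ) x = Icc (-1:ℝ) x := uIcc_of_le hx.1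
    have hint : IntervalIntegrable φ' volume (-1) x :=
      (hφ'cont.mono (by rw [huIcc]; exact hsub)).intervalIntegrable
    have hftc := intervalIntegral.integral_eq_sub_of_hasDerivAt
      (f := φ) (f' := φ') (fun t ht => hder t (hsub (by rwa [huIcc] at ht))) hint
    rw [intervalIntegral.integral_of_le hx.1] at hftc
    rw [hftc]; ring
  have hconjrep : ∀ x ∈ Icc (-1:ℝ) 1, (starRingEnd ℂ) (φ x)
      = (starRingEnd ℂ) (φ (-1)) + ∫ t in Ioc (-1:ℝ) x, (starRingEnd ℂ) (φ' t) := by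
    intro x hx
    rw [hφrep x hx, map_add, integral_conj]
  -- the function G = φ' ⬝ conj φ and its density h
  set G : ℝ → ℂ := fun x => φ' x * (starRingEnd ℂ) (φ x) with hGdef
  set h : ℝ → ℂ := fun t => φ' t * (starRingEnd ℂ) (φ' t) + ψ t * (starRingEnd ℂ) (φ t)
    with hhdef
  have hφ'conjint : IntegrableOn (fun t => (starRingEnd ℂ) (φ' t)) (Icc (-1:ℝ) 1) :=
    hφ'conjcont.integrableOn_Icc
  have hGrep : ∀ x ∈ Icc (-1:ℝ) 1, G x = ∫ t in Ioc (-1:ℝ) x, h t := by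
    intro x hx
    have hIsub : Icc (-1:ℝ) x ⊆ Icc (-1:ℝ) 1 := Icc_subset_Icc le_rfl hx.2
    have hA := rep_ibp (a := -1) (b := x) hx.1 (u := φ')
      (v := fun y => (starRingEnd ℂ) (φ y)) (g1 := ψ)
      (g2 := fun t => (starRingEnd ℂ) (φ' t))
      (hψint.mono_set hIsub) (hφ'conjint.mono_set hIsub)
      (fun y hy => hodeI y (hIsub hy)) (fun y hy => hconjrep y (hIsub hy))
    beta_reduce at hA
    rw [hbc1, map_zero, mul_zero, sub_zero] at hA
    show φ' x * (starRingEnd ℂ) (φ x)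
      = ∫ t in Ioc (-1:ℝ) x, (φ' t * (starRingEnd ℂ) (φ' t) + ψ t * (starRingEnd ℂ) (φ t))
    exact hA.symm
  -- w: continuity and complex representation
  have hacIoc : ∀ x ∈ Icc (-1:ℝ) 1, w x = w (-1) + ∫ t in Ioc (-1:ℝ) x, w' t := by
    intro x hx
    rw [hac x hx, intervalIntegral.integral_of_le hx.1]
  have hwcont : ContinuousOn w (Icc (-1:ℝ) 1) :=
    (continuousOn_const.add (intervalIntegral.continuousOn_primitive hw'int)).congr
      fun x hx => hacIoc x hx
  have hwccont : ContinuousOn (fun x => (w x : ℂ)) (Icc (-1:ℝ) 1) :=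
    Complex.continuous_ofReal.comp_continuousOn hwcont
  have hwℂrep : ∀ x ∈ Icc (-1:ℝ) 1,
      (w x : ℂ) = (w (-1) : ℂ) + ∫ t in Ioc (-1:ℝ) x, (w' t : ℂ) := by
    intro x hx
    have hcast : (∫ t in Ioc (-1:ℝ) x, ((w' t : ℝ) : ℂ))
        = ((∫ t in Ioc (-1:ℝ) x, w' t : ℝ) : ℂ) := integral_ofReal
    rw [hcast]
    exact_mod_cast hacIoc x hx
  -- integrability of h
  have hhint : IntegrableOn h (Icc (-1:ℝ) 1) := by
    have c1 : IntegrableOn (fun t => φ' t * (starRingEnd ℂ) (φ' t)) (Icc (-1:ℝ) 1) :=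
      (hφ'cont.mul hφ'conjcont).integrableOn_Icc
    have c2 : IntegrableOn (fun t => ψ t * (starRingEnd ℂ) (φ t)) (Icc (-1:ℝ) 1) := by
      have hbd' : ∀ᵐ x ∂(volume.restrict (Icc (-1:ℝ) 1)),
          ‖(starRingEnd ℂ) (φ x)‖ ≤ Cφ := by
        refine (ae_restrict_iff' measurableSet_Icc).2
          (Filter.Eventually.of_forall fun x hx => ?_)
        simpa using hCφ x hx
      have := hψint.bdd_mul (hφconjcont.aestronglyMeasurable measurableSet_Icc) hbd'
      simpa [mul_comm, IntegrableOn] using this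
    exact c1.add c2
  -- main integration by parts
  have hstepB := rep_ibp (a := -1) (b := 1) hone (u := fun x => (w x : ℂ)) (v := G)
    (g1 := fun x => (w' x : ℂ)) (g2 := h)
    (hw'int.ofReal (𝕜 := ℂ)) hhint hwℂrep
    (fun x hx => by
      rw [hGrep x hx]
      have hG0 : G (-1) = 0 := by
        show φ' (-1) * (starRingEnd ℂ) (φ (-1)) = 0
        rw [hbc1, map_zero, mul_zero]
      rw [hG0, zero_add])
  have hG0 : G (-1) = 0 := by
    show φ' (-1) * (starRingEnd ℂ) (φ (-1)) = 0
    rw [hbc1, map_zero, mul_zero]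
  have hG1 : G 1 = 0 := by
    show φ' 1 * (starRingEnd ℂ) (φ 1) = 0
    rw [hbc2, map_zero, mul_zero]
  have hzero : (∫ x in Ioc (-1:ℝ) 1, ((w x : ℂ) * h x + (w' x : ℂ) * G x)) = 0 := by
    rw [hstepB, hG0, hG1, mul_zero, mul_zero, sub_zero]
  -- the four terms and their integrability
  have hT1 : IntegrableOn (fun x => (w x : ℂ) * (‖φ' x‖ : ℂ) ^ 2) (Icc (-1:ℝ) 1) :=
    (hwccont.mul ((Complex.continuous_ofReal.comp_continuousOn hφ'cont.norm).pow 2)).integrableOn_Icc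
  have hT4 : IntegrableOn (fun x => (w x : ℂ) ^ 2 * (‖φ x‖ : ℂ) ^ 2) (Icc (-1:ℝ) 1) :=
    ((hwccont.pow 2).mul ((Complex.continuous_ofReal.comp_continuousOn hφcont.norm).pow 2)).integrableOn_Icc
  have hT2 : IntegrableOn (fun x => (w' x : ℂ) * φ' x * (starRingEnd ℂ) (φ x))
      (Icc (-1:ℝ) 1) := by
    have cb : ContinuousOn (fun x => φ' x * (starRingEnd ℂ) (φ x)) (Icc (-1:ℝ) 1) :=
      hφ'cont.mul hφconjcont
    obtain ⟨C2, hC2⟩ := isCompact_Icc.exists_bound_of_continuousOn cb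
    have := (hw'int.ofReal (𝕜 := ℂ)).bdd_mul
      (cb.aestronglyMeasurable measurableSet_Icc)
      ((ae_restrict_iff' measurableSet_Icc).2 (Filter.Eventually.of_forall hC2))
    have heq : (fun x => (w' x : ℂ) * φ' x * (starRingEnd ℂ) (φ x))
        = fun x => φ' x * (starRingEnd ℂ) (φ x) * (w' x : ℂ) := by
      funext x; ring
    rw [heq]; exact this
  have hT3 : IntegrableOn (fun x => (w x : ℂ) * (q x : ℂ) * (‖φ x‖ : ℂ) ^ 2)
      (Icc (-1:ℝ) 1) := by
    have cb : ContinuousOn (fun x => (w x : ℂ) * (‖φ x‖ : ℂ) ^ 2) (Icc (-1:ℝ) 1) :=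
      hwccont.mul ((Complex.continuous_ofReal.comp_continuousOn hφcont.norm).pow 2)
    obtain ⟨C3, hC3⟩ := isCompact_Icc.exists_bound_of_continuousOn cb
    have := (hq.ofReal (𝕜 := ℂ)).bdd_mul
      (cb.aestronglyMeasurable measurableSet_Icc)
      ((ae_restrict_iff' measurableSet_Icc).2 (Filter.Eventually.of_forall hC3))
    have heq : (fun x => (w x : ℂ) * (q x : ℂ) * (‖φ x‖ : ℂ) ^ 2)
        = fun x => (w x : ℂ) * (‖φ x‖ : ℂ) ^ 2 * (q x : ℂ) := by
      funext x; ring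
    rw [heq]; exact this
  -- pointwise identity
  have hpt : ∀ x, (w x : ℂ) * h x + (w' x : ℂ) * G x
      = (w x : ℂ) * (‖φ' x‖ : ℂ) ^ 2 + (w' x : ℂ) * φ' x * (starRingEnd ℂ) (φ x)
        + (w x : ℂ) * (q x : ℂ) * (‖φ x‖ : ℂ) ^ 2
        - lam * ((w x : ℂ) ^ 2 * (‖φ x‖ : ℂ) ^ 2) := by
    intro x
    simp only [hGdef, hhdef, hψdef, normc_sq]
    ring
  have hT1' := hT1.mono_set (Ioc_subset_Icc_self (a := (-1:ℝ)) (b := 1))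
  have hT2' := hT2.mono_set (Ioc_subset_Icc_self (a := (-1:ℝ)) (b := 1))
  have hT3' := hT3.mono_set (Ioc_subset_Icc_self (a := (-1:ℝ)) (b := 1))
  have hT4' := hT4.mono_set (Ioc_subset_Icc_self (a := (-1:ℝ)) (b := 1))
  have e1 : (∫ x in Ioc (-1:ℝ) 1,
      ((w x : ℂ) * (‖φ' x‖ : ℂ) ^ 2 + (w' x : ℂ) * φ' x * (starRingEnd ℂ) (φ x)
        + (w x : ℂ) * (q x : ℂ) * (‖φ x‖ : ℂ) ^ 2
        - lam * ((w x : ℂ) ^ 2 * (‖φ x‖ : ℂ) ^ 2))) = 0 := by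
    rw [integral_congr_ae (ae_of_all _ fun x => (hpt x).symm)]
    exact hzero
  have e2 : (∫ x in Ioc (-1:ℝ) 1,
      ((w x : ℂ) * (‖φ' x‖ : ℂ) ^ 2 + (w' x : ℂ) * φ' x * (starRingEnd ℂ) (φ x)
        + (w x : ℂ) * (q x : ℂ) * (‖φ x‖ : ℂ) ^ 2
        - lam * ((w x : ℂ) ^ 2 * (‖φ x‖ : ℂ) ^ 2)))
      = (∫ x in Ioc (-1:ℝ) 1, (w x : ℂ) * (‖φ' x‖ : ℂ) ^ 2)
        + (∫ x in Ioc (-1:ℝ) 1, (w' x : ℂ) * φ' x * (starRingEnd ℂ) (φ x))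
        + (∫ x in Ioc (-1:ℝ) 1, (w x : ℂ) * (q x : ℂ) * (‖φ x‖ : ℂ) ^ 2)
        - lam * ∫ x in Ioc (-1:ℝ) 1, (w x : ℂ) ^ 2 * (‖φ x‖ : ℂ) ^ 2 := by
    have s12 : Integrable (fun x => (w x : ℂ) * (‖φ' x‖ : ℂ) ^ 2
        + (w' x : ℂ) * φ' x * (starRingEnd ℂ) (φ x)) (volume.restrict (Ioc (-1:ℝ) 1)) :=
      hT1'.add hT2'
    have s123 : Integrable (fun x => (w x : ℂ) * (‖φ' x‖ : ℂ) ^ 2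
        + (w' x : ℂ) * φ' x * (starRingEnd ℂ) (φ x)
        + (w x : ℂ) * (q x : ℂ) * (‖φ x‖ : ℂ) ^ 2) (volume.restrict (Ioc (-1:ℝ) 1)) :=
      s12.add hT3'
    rw [integral_sub s123 (hT4'.const_mul lam),
      integral_add s12 hT3', integral_add hT1' hT2', integral_const_mul]
  simp only [intervalIntegral.integral_of_le hone]
  have := e2 ▸ e1
  linear_combination this
end
end

section
/- If q(x) ≥ 0 for a.e. x ∈ [−1,1], then every eigenvalue of the Dirichlet problem −y'' + q y = λ w y on [−1,1] is real; that is, the problem admits no non-real eigenvalues. -/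
open MeasureTheory Set Complex

noncomputable section

private theorem aux_no_nonreal
    (q w : ℝ → ℝ)
    (hq : IntegrableOn q (Icc (-1:ℝ) 1))
    (hw : IntegrableOn w (Icc (-1:ℝ) 1))
    (hq0 : ∀ᵐ x ∂(volume.restrict (Icc (-1:ℝ) 1)), 0 ≤ q x)
    (lam : ℂ) (φ φ' : ℝ → ℂ)
    (h1 : ∀ x ∈ Icc (-1:ℝ) 1, HasDerivAt φ (φ' x) x)
    (h2 : ∀ x ∈ Icc (-1:ℝ) 1,
      φ' x = φ' (-1) + ∫ t in (-1:ℝ)..x, ((q t : ℂ) * φ t - lam * (w t : ℂ) * φ t))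
    (hbcA : φ (-1) = 0) (hbcB : φ 1 = 0)
    (x₀ : ℝ) (hx₀ : x₀ ∈ Icc (-1:ℝ) 1) (hx₀ne : φ x₀ ≠ 0)
    (him : lam.im ≠ 0) : False := by
  set I : Set ℝ := Icc (-1:ℝ) 1 with hI
  set μ : Measure ℝ := volume.restrict I with hμ
  set g : ℝ → ℂ := fun t => (q t : ℂ) * φ t - lam * (w t : ℂ) * φ t with hg
  have hIcc : IsCompact I := isCompact_Icc
  have huIcc : uIcc (-1:ℝ) 1 = I := uIcc_of_le (by norm_num)
  -- continuity of φ
  have hφcont : ContinuousOn φ I := fun x hx => (h1 x hx).continuousAt.continuousWithinAt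
  -- integrability of g
  have hqir : IntegrableOn (fun t => (q t : ℂ)) I := hq.ofReal
  have hwir : IntegrableOn (fun t => lam * (w t : ℂ)) I := hw.ofReal.const_mul lam
  have hgi : IntegrableOn g I := by
    have h1i : IntegrableOn (fun t => (q t : ℂ) * φ t) I :=
      hqir.mul_continuousOn hφcont hIcc
    have h2i : IntegrableOn (fun t => lam * (w t : ℂ) * φ t) I :=
      hwir.mul_continuousOn hφcont hIcc
    exact h1i.sub h2i
  -- continuity of φ'
  have hφ'cont : ContinuousOn φ' I := by
    have hc : ContinuousOn (fun x => φ' (-1) + ∫ t in (-1:ℝ)..x, g t) I := by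
      refine continuousOn_const.add ?_
      have := intervalIntegral.continuousOn_primitive_interval (a := (-1:ℝ)) (b := 1)
        (μ := volume) (f := g) (by rwa [huIcc])
      rwa [huIcc] at this
    exact hc.congr fun x hx => h2 x hx
  have hφ'int : IntegrableOn φ' I := hφ'cont.integrableOn_compact hIcc
  -- FTC
  have hFTC : ∀ x ∈ I, ∀ y ∈ I, x ≤ y → (∫ t in x..y, φ' t) = φ y - φ x := by
    intro x hx y hy hxy
    have hsub : uIcc x y ⊆ I := by
      rw [uIcc_of_le hxy]; exact Icc_subset_Icc hx.1 hy.2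
    exact intervalIntegral.integral_eq_sub_of_hasDerivAt
      (fun t ht => h1 t (hsub ht)) ((hφ'cont.mono hsub).intervalIntegrable)
  have hm1 : (-1:ℝ) ∈ I := by constructor <;> norm_num
  have hp1 : (1:ℝ) ∈ I := by constructor <;> norm_num
  -- conj of φ' is integrable/continuous
  have hcφ'cont : ContinuousOn (fun y => (starRingEnd ℂ) (φ' y)) I :=
    continuous_star.comp_continuousOn hφ'cont
  have hcφ'int : IntegrableOn (fun y => (starRingEnd ℂ) (φ' y)) I :=
    hcφ'cont.integrableOn_compact hIcc
  -- the product function and Fubini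
  set H : ℝ × ℝ → ℂ :=
    ({p : ℝ × ℝ | p.1 < p.2}).indicator (fun p => g p.1 * (starRingEnd ℂ) (φ' p.2)) with hH
  have hHint : Integrable H (μ.prod μ) :=
    (hgi.mul_prod hcφ'int).indicator (measurableSet_lt measurable_fst measurable_snd)
  have hswap : (∫ x, (∫ y, H (x, y) ∂μ) ∂μ) = ∫ y, (∫ x, H (x, y) ∂μ) ∂μ :=
    integral_integral_swap hHint
  -- inner integral, left form
  have hL : ∀ x ∈ I, (∫ y, H (x, y) ∂μ) = -(g x * (starRingEnd ℂ) (φ x)) := by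
    intro x hx
    have hfun : (fun y => H (x, y)) = (Ioi x).indicator (fun y => g x * (starRingEnd ℂ) (φ' y)) := by
      funext y
      simp [hH, Set.indicator_apply, Set.mem_Ioi]
    rw [hfun, integral_indicator measurableSet_Ioi, hμ,
      Measure.restrict_restrict measurableSet_Ioi]
    have hset : Ioi x ∩ I = Ioc x 1 := by
      ext t
      simp only [mem_inter_iff, mem_Ioi, hI, mem_Icc, mem_Ioc]
      exact ⟨fun ⟨a, _, c⟩ => ⟨a, c⟩, fun ⟨a, b⟩ => ⟨a, (hx.1.trans a.le), b⟩⟩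
    rw [hset, integral_const_mul, ← intervalIntegral.integral_of_le hx.2]
    have : (∫ t in x..1, (starRingEnd ℂ) (φ' t)) = (starRingEnd ℂ) (∫ t in x..1, φ' t) := by
      rw [intervalIntegral.integral_of_le hx.2, intervalIntegral.integral_of_le hx.2,
        integral_conj]
    rw [this, hFTC x hx 1 hp1 hx.2, hbcB]
    ring_nf
    rw [map_neg]
    ring
  -- inner integral, right form
  have hR : ∀ y ∈ I, (∫ x, H (x, y) ∂μ) = (φ' y - φ' (-1)) * (starRingEnd ℂ) (φ' y) := by
    intro y hy
    have hfun : (fun x => H (x, y)) = (Iio y).indicator (fun x => g x * (starRingEnd ℂ) (φ' y)) := by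
      funext x
      simp [hH, Set.indicator_apply, Set.mem_Iio]
    rw [hfun, integral_indicator measurableSet_Iio, hμ,
      Measure.restrict_restrict measurableSet_Iio]
    have hset : Iio y ∩ I = Ico (-1) y := by
      ext t
      simp only [mem_inter_iff, mem_Iio, hI, mem_Icc, mem_Ico]
      exact ⟨fun ⟨a, b, _⟩ => ⟨b, a⟩, fun ⟨a, b⟩ => ⟨b, a, b.le.trans hy.2⟩⟩
    rw [hset, integral_mul_const, integral_Ico_eq_integral_Ioo, ← integral_Ioc_eq_integral_Ioo,
      ← intervalIntegral.integral_of_le hy.1]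
    have := h2 y hy
    rw [hg]
    rw [show (∫ t in (-1:ℝ)..y, ((q t : ℂ) * φ t - lam * (w t : ℂ) * φ t)) = φ' y - φ' (-1) by
      rw [this]; ring]
  -- outer integrals
  have hLeq : (∫ x, (∫ y, H (x, y) ∂μ) ∂μ) = -∫ x, g x * (starRingEnd ℂ) (φ x) ∂μ := by
    rw [← integral_neg]
    exact setIntegral_congr_fun measurableSet_Icc hL
  have hφ'I0 : (∫ y, φ' y ∂μ) = 0 := by
    rw [hμ, hI, integral_Icc_eq_integral_Ioc, ← intervalIntegral.integral_of_le (by norm_num : (-1:ℝ) ≤ 1),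
      hFTC (-1) hm1 1 hp1 (by norm_num), hbcA, hbcB, sub_zero]
  have hReq : (∫ y, (∫ x, H (x, y) ∂μ) ∂μ) = ∫ y, φ' y * (starRingEnd ℂ) (φ' y) ∂μ := by
    rw [setIntegral_congr_fun measurableSet_Icc hR]
    have hint1 : IntegrableOn (fun y => φ' y * (starRingEnd ℂ) (φ' y)) I :=
      (hφ'cont.mul hcφ'cont).integrableOn_compact hIcc
    have hint2 : IntegrableOn (fun y => φ' (-1) * (starRingEnd ℂ) (φ' y)) I :=
      hcφ'int.const_mul _
    have : (fun y => (φ' y - φ' (-1)) * (starRingEnd ℂ) (φ' y))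
        = fun y => φ' y * (starRingEnd ℂ) (φ' y) - φ' (-1) * (starRingEnd ℂ) (φ' y) := by
      funext y; ring
    rw [this, integral_sub hint1 hint2, integral_const_mul, integral_conj, hφ'I0]
    simp
    rfl
  -- the main identity
  have hmain : (∫ x, g x * (starRingEnd ℂ) (φ x) ∂μ) = -∫ y, φ' y * (starRingEnd ℂ) (φ' y) ∂μ := by
    rw [← hReq, ← hswap, hLeq, neg_neg]
  -- real integrals
  set A : ℝ := ∫ t, q t * Complex.normSq (φ t) ∂μ with hA
  set B : ℝ := ∫ t, w t * Complex.normSq (φ t) ∂μ with hB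
  set C : ℝ := ∫ t, Complex.normSq (φ' t) ∂μ with hC
  have hnφcont : ContinuousOn (fun t => Complex.normSq (φ t)) I :=
    Complex.continuous_normSq.comp_continuousOn hφcont
  have hAint : IntegrableOn (fun t => q t * Complex.normSq (φ t)) I :=
    hq.mul_continuousOn hnφcont hIcc
  have hBint : IntegrableOn (fun t => w t * Complex.normSq (φ t)) I :=
    hw.mul_continuousOn hnφcont hIcc
  have hgsplit : (∫ x, g x * (starRingEnd ℂ) (φ x) ∂μ) = (A : ℂ) - lam * (B : ℂ) := by
    have h1' : (fun x => g x * (starRingEnd ℂ) (φ x))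
        = fun x => ((q x * Complex.normSq (φ x) : ℝ) : ℂ)
            - lam * ((w x * Complex.normSq (φ x) : ℝ) : ℂ) := by
      funext x
      simp only [hg, Complex.ofReal_mul]
      rw [← Complex.mul_conj]
      ring
    have hAint' : Integrable (fun x => ((q x * Complex.normSq (φ x) : ℝ) : ℂ)) μ :=
      hAint.ofReal
    have hBint' : Integrable (fun x => lam * ((w x * Complex.normSq (φ x) : ℝ) : ℂ)) μ :=
      hBint.ofReal.const_mul lam
    rw [h1', integral_sub hAint' hBint', integral_const_mul]
    have e1 : (∫ x, ((q x * Complex.normSq (φ x) : ℝ) : ℂ) ∂μ) = (A : ℂ) := integral_ofReal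
    have e2 : (∫ x, ((w x * Complex.normSq (φ x) : ℝ) : ℂ) ∂μ) = (B : ℂ) := integral_ofReal
    rw [e1, e2]
  have hφ'split : (∫ y, φ' y * (starRingEnd ℂ) (φ' y) ∂μ) = (C : ℂ) := by
    have : (fun y => φ' y * (starRingEnd ℂ) (φ' y))
        = fun y => ((Complex.normSq (φ' y) : ℝ) : ℂ) := by
      funext y; rw [Complex.mul_conj]
    rw [this]
    exact integral_ofReal
  have hkey : (A : ℂ) - lam * (B : ℂ) = -(C : ℂ) := by
    rw [← hgsplit, ← hφ'split, hmain]
  -- imaginary part: B = 0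
  have hBzero : B = 0 := by
    have := congrArg Complex.im hkey
    simp [Complex.sub_im, Complex.mul_im] at this
    rcases this with h | h
    · exact absurd h him
    · exact h
  -- real part: A + C = 0
  have hACzero : A = -C := by
    have := congrArg Complex.re hkey
    simp [Complex.sub_re, Complex.mul_re, hBzero] at this
    exact this
  have hAnn : 0 ≤ A := by
    refine integral_nonneg_of_ae ?_
    filter_upwards [hq0] with t ht
    exact mul_nonneg ht (Complex.normSq_nonneg _)
  have hCnn : 0 ≤ C := integral_nonneg fun t => Complex.normSq_nonneg _
  have hCzero : C = 0 := by linarith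
  -- φ' = 0 a.e. on I
  have hφ'ae : ∀ᵐ t ∂μ, φ' t = 0 := by
    have h0 : (fun t => Complex.normSq (φ' t)) =ᵐ[μ] 0 := by
      rw [← integral_eq_zero_iff_of_nonneg (fun t => Complex.normSq_nonneg _)
        (by exact (Complex.continuous_normSq.comp_continuousOn hφ'cont).integrableOn_compact hIcc)]
      exact hCzero
    filter_upwards [h0] with t ht
    exact Complex.normSq_eq_zero.mp ht
  -- conclude φ x₀ = 0
  have : φ x₀ = 0 := by
    have hint0 : (∫ t in (-1:ℝ)..x₀, φ' t) = 0 := by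
      rw [intervalIntegral.integral_of_le hx₀.1]
      apply integral_eq_zero_of_ae
      exact ae_restrict_of_ae_restrict_of_subset (Ioc_subset_Icc_self.trans
        (Icc_subset_Icc le_rfl hx₀.2)) hφ'ae
    have := hFTC (-1) hm1 x₀ hx₀ hx₀.1
    rw [hint0, hbcA, sub_zero] at this
    exact this.symm
  exact hx₀ne this

/-- if `q ≥ 0` a.e. on `[-1,1]`, every eigenvalue of the indefinite
problem is real. -/
theorem no_nonreal_eigenvalues_of_nonneg_q
    (q w : ℝ → ℝ)
    (hq : IntegrableOn q (Icc (-1:ℝ) 1))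
    (hw : IntegrableOn w (Icc (-1:ℝ) 1))
    (hw0 : ∀ᵐ x ∂(volume.restrict (Icc (-1:ℝ) 1)), w x ≠ 0)
    (hsign : 0 < volume {x ∈ Icc (-1:ℝ) 1 | 0 < w x} ∧
             0 < volume {x ∈ Icc (-1:ℝ) 1 | w x < 0})
    (hq0 : ∀ᵐ x ∂(volume.restrict (Icc (-1:ℝ) 1)), 0 ≤ q x) :
    ∀ lam : ℂ, IsEigenvalue q w lam → lam.im = 0 := by
  rintro lam ⟨φ, φ', h1, h2, hbcA, hbcB, x₀, hx₀, hx₀ne⟩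
  by_contra him
  exact aux_no_nonreal q w hq hw hq0 lam φ φ' h1 h2 hbcA hbcB x₀ hx₀ hx₀ne him
end
end

section
/- Suppose q(−x) = q(x) and w(−x) = −w(x) for x ∈ [−1,1]. If λ = iα with α ∈ ℝ, α ≠ 0, is an eigenvalue of the Dirichlet problem −y'' + q y = λ w y on [−1,1] with eigenfunction φ, then both |φ| and |φ'| are even functions: |φ(−x)| = |φ(x)| and |φ'(−x)| = |φ'(x)| for all x ∈ [−1,1]. -/
open MeasureTheory Set Complex

noncomputable section

lemma my_gronwall_zero (a b : ℝ) (hab : a ≤ b) (u k : ℝ → ℝ)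
    (hu : ContinuousOn u (Icc a b)) (hk : IntegrableOn k (Icc a b))
    (hk0 : ∀ t ∈ Icc a b, 0 ≤ k t) (hu0 : ∀ t ∈ Icc a b, 0 ≤ u t)
    (hineq : ∀ x ∈ Icc a b, u x ≤ ∫ t in a..x, k t * u t) :
    ∀ x ∈ Icc a b, u x = 0 := by
  obtain ⟨C, hC⟩ : ∃ C, ∀ t ∈ Icc a b, ‖u t‖ ≤ C :=
    isCompact_Icc.exists_bound_of_continuousOn hu
  have hum : AEStronglyMeasurable u (volume.restrict (Icc a b)) :=
    hu.aestronglyMeasurable measurableSet_Icc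
  have hub : ∀ᵐ t ∂(volume.restrict (Icc a b)), ‖u t‖ ≤ C := by
    filter_upwards [ae_restrict_mem measurableSet_Icc] with t ht using hC t ht
  have hku : IntegrableOn (fun t => u t * k t) (Icc a b) :=
    Integrable.bdd_mul hk hum hub
  have hku' : IntegrableOn (fun t => k t * u t) (Icc a b) := by
    simpa [mul_comm] using hku
  have hkuI : ∀ x y, x ∈ Icc a b → y ∈ Icc a b →
      IntervalIntegrable (fun t => k t * u t) volume x y := by
    intro x y hx hy
    refine (hku'.mono_set ?_).intervalIntegrable
    exact uIcc_subset_Icc hx hy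
  set S : Set ℝ := {x ∈ Icc a b | ∀ t ∈ Icc a x, u t = 0} with hS
  have haS : a ∈ S := by
    refine ⟨left_mem_Icc.2 hab, fun t ht => ?_⟩
    have hta : t = a := le_antisymm ht.2 ht.1
    rw [hta]
    have h1 := hineq a (left_mem_Icc.2 hab)
    simp only [intervalIntegral.integral_same] at h1
    exact le_antisymm h1 (hu0 a (left_mem_Icc.2 hab))
  have hSne : S.Nonempty := ⟨a, haS⟩
  have hSbd : BddAbove S := ⟨b, fun x hx => hx.1.2⟩
  set c := sSup S with hc
  have hcIcc : c ∈ Icc a b := ⟨le_csSup hSbd haS, csSup_le hSne (fun x hx => hx.1.2)⟩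
  -- u vanishes on [a, c)
  have hvan : ∀ t ∈ Ico a c, u t = 0 := by
    intro t ht
    obtain ⟨x, hxS, hxt⟩ := exists_lt_of_lt_csSup hSne ht.2
    exact hxS.2 t ⟨ht.1, hxt.le⟩
  -- u c = 0 : integral over [a,c] of k*u is 0 since integrand is 0 a.e.
  have hucz : u c = 0 := by
    have h1 := hineq c hcIcc
    have h2 : (∫ t in a..c, k t * u t) = 0 := by
      rw [intervalIntegral.integral_of_le hcIcc.1]
      refine integral_eq_zero_of_ae ?_
      have : ∀ᵐ t ∂(volume.restrict (Ioc a c)), t ≠ c := by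
        refine ae_restrict_of_ae ?_
        refine ae_iff.2 ?_
        simp only [not_ne_iff]
        have : {x : ℝ | x = c} = {c} := by ext x; simp
        rw [this]
        exact measure_singleton c
      filter_upwards [this, ae_restrict_mem measurableSet_Ioc] with t htne ht
      have : u t = 0 := hvan t ⟨ht.1.le, lt_of_le_of_ne ht.2 htne⟩
      simp [this]
    rw [h2] at h1
    exact le_antisymm h1 (hu0 c hcIcc)
  have hcS : c ∈ S := by
    refine ⟨hcIcc, fun t ht => ?_⟩
    rcases eq_or_lt_of_le ht.2 with h | h
    · rw [h]; exact hucz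
    · exact hvan t ⟨ht.1, h⟩
  -- now show c = b
  rcases eq_or_lt_of_le hcIcc.2 with hcb | hcb
  · intro x hx
    exact hcS.2 x ⟨hx.1, hcb ▸ hx.2⟩
  · exfalso
    -- find d ∈ (c, b] with ∫ t in c..x, k t < 1/2 for all x ∈ [c,d]
    have hkc : ContinuousOn (fun x => ∫ t in c..x, k t) (Icc c b) := by
      have : IntegrableOn k (Icc c b) := hk.mono_set (Icc_subset_Icc hcIcc.1 le_rfl)
      have h := intervalIntegral.continuousOn_primitive_interval
        (a := c) (b := b) (f := k) (μ := volume) (by rwa [uIcc_of_le hcb.le])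
      rwa [uIcc_of_le hcb.le] at h
    have hKc0 : (∫ t in c..c, k t) = 0 := intervalIntegral.integral_same
    have := (hkc c (left_mem_Icc.2 hcb.le)).tendsto
    rw [hKc0] at this
    have hev : ∀ᶠ x in nhdsWithin c (Icc c b), (∫ t in c..x, k t) < 1/2 := by
      have : Filter.Tendsto (fun x => ∫ t in c..x, k t) (nhdsWithin c (Icc c b)) (nhds 0) := this
      exact this (IsOpen.mem_nhds isOpen_Iio (by norm_num) : Iio (1/2:ℝ) ∈ nhds (0:ℝ))
    obtain ⟨ε, hε, hball⟩ := Metric.mem_nhdsWithin_iff.1 hev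
    set d := min (c + ε/2) b with hd
    have hcd : c < d := lt_min (by linarith) hcb
    have hdb : d ≤ b := min_le_right _ _
    have hdK : ∀ x ∈ Icc c d, (∫ t in c..x, k t) < 1/2 := by
      intro x hx
      refine hball ⟨?_, hx.1, hx.2.trans hdb⟩
      rw [Metric.mem_ball, Real.dist_eq]
      have h1 : x ≤ c + ε/2 := hx.2.trans (min_le_left _ _)
      have h2 : c ≤ x := hx.1
      rw [abs_lt]; constructor <;> linarith
    -- max of u on [c,d]
    have hcdsub : Icc c d ⊆ Icc a b := Icc_subset_Icc hcIcc.1 hdb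
    obtain ⟨x₀, hx₀, hx₀max⟩ := isCompact_Icc.exists_isMaxOn (nonempty_Icc.2 hcd.le)
      (hu.mono hcdsub)
    set M := u x₀ with hM
    have hM0 : 0 ≤ M := hu0 x₀ (hcdsub hx₀)
    -- for x ∈ [c,d] : u x ≤ M * ∫_c^x k < M/2
    have key : ∀ x ∈ Icc c d, u x ≤ M * (1/2) := by
      intro x hx
      have hxab : x ∈ Icc a b := hcdsub hx
      have h1 := hineq x hxab
      have hsplit : (∫ t in a..x, k t * u t)
          = (∫ t in a..c, k t * u t) + ∫ t in c..x, k t * u t :=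
        (intervalIntegral.integral_add_adjacent_intervals
          (hkuI a c (left_mem_Icc.2 hab) hcIcc)
          (hkuI c x (hcIcc : c ∈ Icc a b) hxab)).symm
      have hz : (∫ t in a..c, k t * u t) = 0 := by
        rw [intervalIntegral.integral_of_le hcIcc.1]
        refine integral_eq_zero_of_ae ?_
        filter_upwards [ae_restrict_mem measurableSet_Ioc] with t ht
        have : u t = 0 := hcS.2 t ⟨ht.1.le, ht.2⟩
        simp [this]
      have h2 : (∫ t in c..x, k t * u t) ≤ ∫ t in c..x, k t * M := by
        refine intervalIntegral.integral_mono_on hx.1 (hkuI c x hcIcc hxab) ?_ ?_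
        · exact ((hk.mono_set (uIcc_subset_Icc hcIcc hxab)).intervalIntegrable).mul_const M
        · intro t ht
          have htab : t ∈ Icc a b := ⟨hcIcc.1.trans ht.1, ht.2.trans hxab.2⟩
          exact mul_le_mul_of_nonneg_left
            (hx₀max ⟨ht.1, ht.2.trans hx.2⟩) (hk0 t htab)
      have h3 : (∫ t in c..x, k t * M) = (∫ t in c..x, k t) * M := by
        rw [intervalIntegral.integral_mul_const]
      have h4 : (∫ t in c..x, k t) * M ≤ (1/2) * M :=
        mul_le_mul_of_nonneg_right (hdK x hx).le hM0
      calc u x ≤ _ := h1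
        _ = _ := hsplit
        _ ≤ M * (1/2) := by rw [hz, zero_add]; linarith
    have hMle : M ≤ M * (1/2) := key x₀ hx₀
    have hMz : M = 0 := by linarith
    have hdS : d ∈ S := by
      refine ⟨⟨hcIcc.1.trans hcd.le, hdb⟩, fun t ht => ?_⟩
      rcases le_or_gt t c with h | h
      · exact hcS.2 t ⟨ht.1, h⟩
      · have := key t ⟨h.le, ht.2⟩
        have h0 := hu0 t (hcdsub ⟨h.le, ht.2⟩)
        rw [hMz] at this; linarith
    have : d ≤ c := le_csSup hSbd hdS
    exact absurd this (not_le.2 hcd)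

lemma my_unique (q w : ℝ → ℝ) (hq : IntegrableOn q (Icc (-1:ℝ) 1))
    (hw : IntegrableOn w (Icc (-1:ℝ) 1)) (lam : ℂ) (y y' : ℝ → ℂ)
    (hd : ∀ x ∈ Icc (-1:ℝ) 1, HasDerivAt y (y' x) x)
    (hrel : ∀ x ∈ Icc (-1:ℝ) 1,
      y' x = y' (-1) + ∫ t in (-1:ℝ)..x, ((q t : ℂ) * y t - lam * (w t : ℂ) * y t))
    (h0 : y (-1) = 0) (h0' : y' (-1) = 0) :
    ∀ x ∈ Icc (-1:ℝ) 1, y x = 0 ∧ y' x = 0 := by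
  set g : ℝ → ℂ := fun t => (q t : ℂ) * y t - lam * (w t : ℂ) * y t with hgdef
  have hycont : ContinuousOn y (Icc (-1:ℝ) 1) :=
    fun x hx => ((hd x hx).continuousAt).continuousWithinAt
  have hym : AEStronglyMeasurable y (volume.restrict (Icc (-1:ℝ) 1)) :=
    hycont.aestronglyMeasurable measurableSet_Icc
  obtain ⟨C, hC⟩ : ∃ C, ∀ t ∈ Icc (-1:ℝ) 1, ‖y t‖ ≤ C :=
    isCompact_Icc.exists_bound_of_continuousOn hycont
  have hybd : ∀ᵐ t ∂(volume.restrict (Icc (-1:ℝ) 1)), ‖y t‖ ≤ C := by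
    filter_upwards [ae_restrict_mem measurableSet_Icc] with t ht using hC t ht
  have hqC : IntegrableOn (fun t => (q t : ℂ)) (Icc (-1:ℝ) 1) := hq.ofReal
  have hwC : IntegrableOn (fun t => (w t : ℂ)) (Icc (-1:ℝ) 1) := hw.ofReal
  have hqy : IntegrableOn (fun t => (q t : ℂ) * y t) (Icc (-1:ℝ) 1) := by
    have := Integrable.bdd_mul hqC hym hybd
    exact (integrable_congr (by filter_upwards with t using mul_comm (y t) ((q t : ℂ)))).1 this
  have hwy : IntegrableOn (fun t => lam * (w t : ℂ) * y t) (Icc (-1:ℝ) 1) := by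
    have h1 := Integrable.bdd_mul hwC hym hybd
    have h2 := h1.const_mul lam
    exact (integrable_congr (by filter_upwards with t using by ring)).1 h2
  have hg : IntegrableOn g (Icc (-1:ℝ) 1) := hqy.sub hwy
  have hgI : ∀ x₁ x₂, x₁ ∈ Icc (-1:ℝ) 1 → x₂ ∈ Icc (-1:ℝ) 1 →
      IntervalIntegrable g volume x₁ x₂ := fun x₁ x₂ h1 h2 =>
    (hg.mono_set (uIcc_subset_Icc h1 h2)).intervalIntegrable
  have hIcc : uIcc (-1:ℝ) 1 = Icc (-1:ℝ) 1 := uIcc_of_le (by norm_num)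
  have hy'cont : ContinuousOn y' (Icc (-1:ℝ) 1) := by
    have hprim : ContinuousOn (fun x => y' (-1) + ∫ t in (-1:ℝ)..x, g t) (Icc (-1:ℝ) 1) := by
      have h := intervalIntegral.continuousOn_primitive_interval
        (a := (-1:ℝ)) (b := 1) (f := g) (μ := volume) (by rwa [hIcc])
      rw [hIcc] at h
      exact continuousOn_const.add h
    exact ContinuousOn.congr hprim (fun x hx => hrel x hx)
  have hy'I : ∀ x₁ x₂, x₁ ∈ Icc (-1:ℝ) 1 → x₂ ∈ Icc (-1:ℝ) 1 →
      IntervalIntegrable y' volume x₁ x₂ := fun x₁ x₂ h1 h2 =>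
    (hy'cont.mono (uIcc_subset_Icc h1 h2)).intervalIntegrable
  have hFTC : ∀ x ∈ Icc (-1:ℝ) 1, y x = ∫ t in (-1:ℝ)..x, y' t := by
    intro x hx
    have huIcc : uIcc (-1:ℝ) x = Icc (-1:ℝ) x := uIcc_of_le hx.1
    have h := intervalIntegral.integral_eq_sub_of_hasDerivAt
      (f := y) (f' := y') (a := (-1:ℝ)) (b := x)
      (fun t ht => hd t (by rw [huIcc] at ht; exact ⟨ht.1, ht.2.trans hx.2⟩))
      (hy'I (-1) x (left_mem_Icc.2 (by norm_num)) hx)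
    rw [h, h0, sub_zero]
  set u : ℝ → ℝ := fun t => ‖y t‖ + ‖y' t‖ with hudef
  set k : ℝ → ℝ := fun t => 1 + |q t| + ‖lam‖ * |w t| with hkdef
  have hucont : ContinuousOn u (Icc (-1:ℝ) 1) := (hycont.norm).add (hy'cont.norm)
  have hkint : IntegrableOn k (Icc (-1:ℝ) 1) :=
    ((integrable_const 1).add hq.abs).add (hw.abs.const_mul ‖lam‖)
  have hk0 : ∀ t ∈ Icc (-1:ℝ) 1, 0 ≤ k t := by
    intro t _
    have := abs_nonneg (q t)
    have := mul_nonneg (norm_nonneg lam) (abs_nonneg (w t))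
    simp only [hkdef]; linarith
  have hu0 : ∀ t ∈ Icc (-1:ℝ) 1, 0 ≤ u t := fun t _ =>
    add_nonneg (norm_nonneg _) (norm_nonneg _)
  -- the key inequality
  have hineq : ∀ x ∈ Icc (-1:ℝ) 1, u x ≤ ∫ t in (-1:ℝ)..x, k t * u t := by
    intro x hx
    have hm1 : (-1:ℝ) ∈ Icc (-1:ℝ) 1 := left_mem_Icc.2 (by norm_num)
    have hy'x : y' x = ∫ t in (-1:ℝ)..x, g t := by rw [hrel x hx, h0', zero_add]
    have h1 : ‖y x‖ ≤ ∫ t in (-1:ℝ)..x, ‖y' t‖ := by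
      rw [hFTC x hx]
      exact intervalIntegral.norm_integral_le_integral_norm hx.1
    have h2 : ‖y' x‖ ≤ ∫ t in (-1:ℝ)..x, ‖g t‖ := by
      rw [hy'x]
      exact intervalIntegral.norm_integral_le_integral_norm hx.1
    have hadd : (∫ t in (-1:ℝ)..x, ‖y' t‖) + (∫ t in (-1:ℝ)..x, ‖g t‖)
        = ∫ t in (-1:ℝ)..x, (‖y' t‖ + ‖g t‖) :=
      (intervalIntegral.integral_add ((hy'I (-1) x hm1 hx).norm)
        ((hgI (-1) x hm1 hx).norm)).symm
    have hmono : (∫ t in (-1:ℝ)..x, (‖y' t‖ + ‖g t‖)) ≤ ∫ t in (-1:ℝ)..x, k t * u t := by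
      refine intervalIntegral.integral_mono_on hx.1
        (((hy'I (-1) x hm1 hx).norm).add ((hgI (-1) x hm1 hx).norm)) ?_ ?_
      · -- k * u integrable
        have hum : AEStronglyMeasurable u (volume.restrict (Icc (-1:ℝ) 1)) :=
          hucont.aestronglyMeasurable measurableSet_Icc
        obtain ⟨D, hD⟩ := isCompact_Icc.exists_bound_of_continuousOn hucont
        have hub : ∀ᵐ t ∂(volume.restrict (Icc (-1:ℝ) 1)), ‖u t‖ ≤ D := by
          filter_upwards [ae_restrict_mem measurableSet_Icc] with t ht using hD t ht
        have hku : IntegrableOn (fun t => k t * u t) (Icc (-1:ℝ) 1) := by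
          have := Integrable.bdd_mul hkint hum hub
          exact (integrable_congr (by filter_upwards with t using mul_comm (u t) (k t))).1 this
        exact (hku.mono_set (uIcc_subset_Icc hm1 hx)).intervalIntegrable
      · intro t ht
        have hA : 0 ≤ ‖y t‖ := norm_nonneg _
        have hB : 0 ≤ ‖y' t‖ := norm_nonneg _
        have hQ : 0 ≤ |q t| := abs_nonneg _
        have hW : 0 ≤ ‖lam‖ * |w t| := mul_nonneg (norm_nonneg _) (abs_nonneg _)
        have hgbd : ‖g t‖ ≤ |q t| * ‖y t‖ + ‖lam‖ * |w t| * ‖y t‖ := by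
          refine (norm_sub_le _ _).trans ?_
          have e1 : ‖(q t : ℂ) * y t‖ = |q t| * ‖y t‖ := by
            rw [norm_mul, Complex.norm_real, Real.norm_eq_abs]
          have e2 : ‖lam * (w t : ℂ) * y t‖ = ‖lam‖ * |w t| * ‖y t‖ := by
            rw [norm_mul, norm_mul, Complex.norm_real, Real.norm_eq_abs]
          rw [e1, e2]
        simp only [hkdef, hudef]
        nlinarith [hgbd]
    calc u x = ‖y x‖ + ‖y' x‖ := rfl
      _ ≤ (∫ t in (-1:ℝ)..x, ‖y' t‖) + (∫ t in (-1:ℝ)..x, ‖g t‖) := add_le_add h1 h2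
      _ = ∫ t in (-1:ℝ)..x, (‖y' t‖ + ‖g t‖) := hadd
      _ ≤ _ := hmono
  have hzero := my_gronwall_zero (-1) 1 (by norm_num) u k hucont hkint hk0 hu0 hineq
  intro x hx
  have hux : ‖y x‖ + ‖y' x‖ = 0 := hzero x hx
  have h1 : ‖y x‖ = 0 := by nlinarith [norm_nonneg (y x), norm_nonneg (y' x)]
  have h2 : ‖y' x‖ = 0 := by nlinarith [norm_nonneg (y x), norm_nonneg (y' x)]
  exact ⟨norm_eq_zero.1 h1, norm_eq_zero.1 h2⟩

lemma my_intervalIntegral_conj (f : ℝ → ℂ) (a b : ℝ) :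
    (∫ t in a..b, (starRingEnd ℂ) (f t)) = (starRingEnd ℂ) (∫ t in a..b, f t) := by
  simp only [intervalIntegral, ← integral_conj, map_sub]

lemma my_integrable (q w : ℝ → ℝ) (hq : IntegrableOn q (Icc (-1:ℝ) 1))
    (hw : IntegrableOn w (Icc (-1:ℝ) 1)) (lam : ℂ) (φ : ℝ → ℂ)
    (hφ : ContinuousOn φ (Icc (-1:ℝ) 1)) :
    IntegrableOn (fun t => (q t : ℂ) * φ t - lam * (w t : ℂ) * φ t) (Icc (-1:ℝ) 1) := by
  have hym : AEStronglyMeasurable φ (volume.restrict (Icc (-1:ℝ) 1)) :=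
    hφ.aestronglyMeasurable measurableSet_Icc
  obtain ⟨C, hC⟩ : ∃ C, ∀ t ∈ Icc (-1:ℝ) 1, ‖φ t‖ ≤ C :=
    isCompact_Icc.exists_bound_of_continuousOn hφ
  have hybd : ∀ᵐ t ∂(volume.restrict (Icc (-1:ℝ) 1)), ‖φ t‖ ≤ C := by
    filter_upwards [ae_restrict_mem measurableSet_Icc] with t ht using hC t ht
  have hqC : IntegrableOn (fun t => (q t : ℂ)) (Icc (-1:ℝ) 1) := hq.ofReal
  have hwC : IntegrableOn (fun t => (w t : ℂ)) (Icc (-1:ℝ) 1) := hw.ofReal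
  have hqy : IntegrableOn (fun t => (q t : ℂ) * φ t) (Icc (-1:ℝ) 1) := by
    have := Integrable.bdd_mul hqC hym hybd
    exact (integrable_congr (by filter_upwards with t using mul_comm (φ t) ((q t : ℂ)))).1 this
  have hwy : IntegrableOn (fun t => lam * (w t : ℂ) * φ t) (Icc (-1:ℝ) 1) := by
    have h1 := Integrable.bdd_mul hwC hym hybd
    have h2 := h1.const_mul lam
    exact (integrable_congr (Filter.Eventually.of_forall (fun t => by ring))).1 h2
  exact hqy.sub hwy

/-- under the symmetry conditions, an eigenfunction `φ` of a nonzero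
purely imaginary eigenvalue `iα` has `|φ|` and `|φ'|` even. -/
theorem eigenfunction_modulus_even
    (q w : ℝ → ℝ)
    (hq : IntegrableOn q (Icc (-1:ℝ) 1))
    (hw : IntegrableOn w (Icc (-1:ℝ) 1))
    (hw0 : ∀ᵐ x ∂(volume.restrict (Icc (-1:ℝ) 1)), w x ≠ 0)
    (hsign : 0 < volume {x ∈ Icc (-1:ℝ) 1 | 0 < w x} ∧
             0 < volume {x ∈ Icc (-1:ℝ) 1 | w x < 0})
    (hqsym : ∀ x ∈ Icc (-1:ℝ) 1, q (-x) = q x)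
    (hwsym : ∀ x ∈ Icc (-1:ℝ) 1, w (-x) = -w x)
    (α : ℝ) (hα : α ≠ 0) (φ φ' : ℝ → ℂ)
    (heig : IsEigenpair q w (Complex.I * (α : ℂ)) φ φ') :
    ∀ x ∈ Icc (-1:ℝ) 1, ‖φ (-x)‖ = ‖φ x‖ ∧ ‖φ' (-x)‖ = ‖φ' x‖ := by
  obtain ⟨hdφ, hrelφ, hφm1, hφ1, x₀, hx₀, hφx₀⟩ := heig
  set lam : ℂ := Complex.I * (α : ℂ) with hlam
  have hconj : (starRingEnd ℂ) lam = -lam := by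
    simp [hlam, map_mul, Complex.conj_I, Complex.conj_ofReal]
    try ring
  have hm1 : (-1:ℝ) ∈ Icc (-1:ℝ) 1 := left_mem_Icc.2 (by norm_num)
  have h1mem : (1:ℝ) ∈ Icc (-1:ℝ) 1 := right_mem_Icc.2 (by norm_num)
  have hneg : ∀ x ∈ Icc (-1:ℝ) 1, -x ∈ Icc (-1:ℝ) 1 := by
    intro x hx; constructor <;> [linarith [hx.2]; linarith [hx.1]]
  -- continuity of φ, φ'
  have hφcont : ContinuousOn φ (Icc (-1:ℝ) 1) :=
    fun x hx => ((hdφ x hx).continuousAt).continuousWithinAt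
  obtain ⟨g, hgdef⟩ : ∃ g : ℝ → ℂ, g = fun t => (q t : ℂ) * φ t - lam * (w t : ℂ) * φ t :=
    ⟨_, rfl⟩
  rw [← hgdef] at hrelφ
  have hg : IntegrableOn g (Icc (-1:ℝ) 1) := by
    rw [hgdef]; exact my_integrable q w hq hw lam φ hφcont
  have hgI : ∀ x₁ x₂, x₁ ∈ Icc (-1:ℝ) 1 → x₂ ∈ Icc (-1:ℝ) 1 →
      IntervalIntegrable g volume x₁ x₂ := fun x₁ x₂ h1 h2 =>
    (hg.mono_set (uIcc_subset_Icc h1 h2)).intervalIntegrable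
  -- the reflected conjugate ψ
  obtain ⟨ψ, hψdef⟩ : ∃ ψ : ℝ → ℂ, ψ = fun x => (starRingEnd ℂ) (φ (-x)) := ⟨_, rfl⟩
  obtain ⟨ψ', hψ'def⟩ : ∃ ψ' : ℝ → ℂ, ψ' = fun x => -(starRingEnd ℂ) (φ' (-x)) := ⟨_, rfl⟩
  have hdψ : ∀ x ∈ Icc (-1:ℝ) 1, HasDerivAt ψ (ψ' x) x := by
    intro x hx
    have h2 : HasDerivAt (fun t => φ (-t)) (-(φ' (-x))) x := by
      have := HasDerivAt.scomp (x := x) (by simpa using hdφ (-x) (hneg x hx)) (hasDerivAt_neg x)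
      rw [neg_one_smul] at this
      exact this
    have h3 := h2.star
    simp only [hψdef, hψ'def]
    simpa using h3
  have hψcont : ContinuousOn ψ (Icc (-1:ℝ) 1) :=
    fun x hx => ((hdψ x hx).continuousAt).continuousWithinAt
  obtain ⟨G, hGdef⟩ : ∃ G : ℝ → ℂ, G = fun t => (q t : ℂ) * ψ t - lam * (w t : ℂ) * ψ t :=
    ⟨_, rfl⟩
  have hG : IntegrableOn G (Icc (-1:ℝ) 1) := by
    rw [hGdef]; exact my_integrable q w hq hw lam ψ hψcont
  have hGI : ∀ x₁ x₂, x₁ ∈ Icc (-1:ℝ) 1 → x₂ ∈ Icc (-1:ℝ) 1 →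
      IntervalIntegrable G volume x₁ x₂ := fun x₁ x₂ h1 h2 =>
    (hG.mono_set (uIcc_subset_Icc h1 h2)).intervalIntegrable
  -- integral relation for ψ'
  have hrelψ : ∀ x ∈ Icc (-1:ℝ) 1, ψ' x = ψ' (-1) + ∫ t in (-1:ℝ)..x, G t := by
    intro x hx
    have key : ψ' x - ψ' (-1) = ∫ t in (-1:ℝ)..x, G t := by
      have e1 : ψ' x - ψ' (-1) = (starRingEnd ℂ) (φ' 1 - φ' (-x)) := by
        simp only [hψ'def, neg_neg, map_sub]; ring
      have e2 : φ' 1 - φ' (-x) = ∫ t in (-x)..(1:ℝ), g t := by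
        have r1 := hrelφ 1 h1mem
        have r2 := hrelφ (-x) (hneg x hx)
        have hadd : (∫ t in (-1:ℝ)..(-x), g t) + (∫ t in (-x)..(1:ℝ), g t)
            = ∫ t in (-1:ℝ)..(1:ℝ), g t :=
          intervalIntegral.integral_add_adjacent_intervals
            (hgI (-1) (-x) hm1 (hneg x hx)) (hgI (-x) 1 (hneg x hx) h1mem)
        rw [r1, r2, ← hadd]; ring
      have e3 : (starRingEnd ℂ) (∫ t in (-x)..(1:ℝ), g t)
          = ∫ t in (-x)..(1:ℝ), (starRingEnd ℂ) (g t) :=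
        (my_intervalIntegral_conj g (-x) 1).symm
      have e4 : (∫ t in (-x)..(1:ℝ), (starRingEnd ℂ) (g t))
          = ∫ s in (-1:ℝ)..x, (starRingEnd ℂ) (g (-s)) := by
        rw [intervalIntegral.integral_comp_neg (fun t => (starRingEnd ℂ) (g t))]
        norm_num
      have e5 : (∫ s in (-1:ℝ)..x, (starRingEnd ℂ) (g (-s))) = ∫ t in (-1:ℝ)..x, G t := by
        refine intervalIntegral.integral_congr ?_
        intro s hs
        rw [uIcc_of_le hx.1] at hs
        have hsmem : s ∈ Icc (-1:ℝ) 1 := ⟨hs.1, hs.2.trans hx.2⟩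
        simp only [hgdef, hGdef, hψdef, map_sub, map_mul, Complex.conj_ofReal,
          hqsym s hsmem, hwsym s hsmem, hconj]
        push_cast
        ring
      rw [e1, e2, e3, e4, e5]
    linear_combination key
  -- boundary values of ψ
  have hψm1 : ψ (-1) = 0 := by simp [hψdef, hφ1]
  -- φ' (-1) ≠ 0
  have hφ'm1 : φ' (-1) ≠ 0 := by
    intro hcon
    have hrelφ' : ∀ x ∈ Icc (-1:ℝ) 1,
        φ' x = φ' (-1) + ∫ t in (-1:ℝ)..x, ((q t : ℂ) * φ t - lam * (w t : ℂ) * φ t) := by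
      rw [hgdef] at hrelφ; exact hrelφ
    have := my_unique q w hq hw lam φ φ' hdφ hrelφ' hφm1 hcon
    exact hφx₀ ((this x₀ hx₀).1)
  -- proportionality constant
  obtain ⟨c, hcdef⟩ : ∃ c : ℂ, c = ψ' (-1) / φ' (-1) := ⟨_, rfl⟩
  obtain ⟨δ, hδdef⟩ : ∃ δ : ℝ → ℂ, δ = fun x => ψ x - c * φ x := ⟨_, rfl⟩
  obtain ⟨δ', hδ'def⟩ : ∃ δ' : ℝ → ℂ, δ' = fun x => ψ' x - c * φ' x := ⟨_, rfl⟩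
  have hdδ : ∀ x ∈ Icc (-1:ℝ) 1, HasDerivAt δ (δ' x) x := by
    intro x hx
    rw [hδdef, hδ'def]
    exact (hdψ x hx).sub ((hdφ x hx).const_mul c)
  have hrelδ : ∀ x ∈ Icc (-1:ℝ) 1,
      δ' x = δ' (-1) + ∫ t in (-1:ℝ)..x, ((q t : ℂ) * δ t - lam * (w t : ℂ) * δ t) := by
    intro x hx
    have r1 := hrelψ x hx
    have r2 := hrelφ x hx
    have hsub : (∫ t in (-1:ℝ)..x, G t) - c * (∫ t in (-1:ℝ)..x, g t)
        = ∫ t in (-1:ℝ)..x, ((q t : ℂ) * δ t - lam * (w t : ℂ) * δ t) := by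
      rw [← intervalIntegral.integral_const_mul,
        ← intervalIntegral.integral_sub (hGI (-1) x hm1 hx)
          ((hgI (-1) x hm1 hx).const_mul c)]
      refine intervalIntegral.integral_congr ?_
      intro s _
      simp only [hGdef, hgdef, hδdef]
      ring
    simp only [hδ'def]
    rw [r1, r2, ← hsub]
    ring
  have hδm1 : δ (-1) = 0 := by simp [hδdef, hψm1, hφm1]
  have hδ'm1 : δ' (-1) = 0 := by
    rw [hδ'def]
    simp only [hcdef]
    field_simp
    ring
  have hδzero := my_unique q w hq hw lam δ δ' hdδ hrelδ hδm1 hδ'm1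
  have hprop : ∀ x ∈ Icc (-1:ℝ) 1, ψ x = c * φ x ∧ ψ' x = c * φ' x := by
    intro x hx
    obtain ⟨h1, h2⟩ := hδzero x hx
    rw [hδdef] at h1
    rw [hδ'def] at h2
    constructor
    · have h1' : ψ x - c * φ x = 0 := h1
      linear_combination h1'
    · have h2' : ψ' x - c * φ' x = 0 := h2
      linear_combination h2'
  -- |c| = 1
  have hcnorm : ‖c‖ = 1 := by
    have e1 : (starRingEnd ℂ) (φ x₀) = c * φ (-x₀) := by
      have := (hprop (-x₀) (hneg x₀ hx₀)).1
      simpa [hψdef, neg_neg] using this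
    have e2 : φ (-x₀) = (starRingEnd ℂ) c * (starRingEnd ℂ) (φ x₀) := by
      have h := (hprop x₀ hx₀).1
      simp only [hψdef] at h
      have := congrArg (starRingEnd ℂ) h
      simpa [map_mul] using this
    have e3 : (starRingEnd ℂ) (φ x₀) = c * (starRingEnd ℂ) c * (starRingEnd ℂ) (φ x₀) := by
      calc (starRingEnd ℂ) (φ x₀) = c * φ (-x₀) := e1
        _ = c * ((starRingEnd ℂ) c * (starRingEnd ℂ) (φ x₀)) := by rw [e2]
        _ = c * (starRingEnd ℂ) c * (starRingEnd ℂ) (φ x₀) := (mul_assoc _ _ _).symm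
    have hne : (starRingEnd ℂ) (φ x₀) ≠ 0 := by
      simpa using hφx₀
    have hcc : c * (starRingEnd ℂ) c = 1 := by
      have h4 : (c * (starRingEnd ℂ) c) * (starRingEnd ℂ) (φ x₀)
          = 1 * (starRingEnd ℂ) (φ x₀) := by rw [one_mul]; exact e3.symm
      exact mul_right_cancel₀ hne h4
    have : (Complex.normSq c : ℂ) = 1 := by rw [← Complex.mul_conj]; exact hcc
    have hns : Complex.normSq c = 1 := by exact_mod_cast this
    have habs : ‖c‖ ^ 2 = 1 := by
      rw [← Complex.sq_norm] at hns
      simpa using hns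
    nlinarith [norm_nonneg c]
  -- conclusion
  intro x hx
  constructor
  · have h := (hprop x hx).1
    have : ‖ψ x‖ = ‖c * φ x‖ := by rw [h]
    simp only [hψdef, RCLike.norm_conj, norm_mul, hcnorm, one_mul] at this
    exact this
  · have h := (hprop x hx).2
    have : ‖ψ' x‖ = ‖c * φ' x‖ := by rw [h]
    simp only [hψ'def, norm_neg, RCLike.norm_conj, norm_mul, hcnorm, one_mul] at this
    exact this
end
end
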